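/- arXiv:2204.08517 — 7 statements merged into one kernel-verified Lean document; each statement's English description precedes it below -/
import Mathlib

section
/- A function f : T → ℂ is holomorphic on T if and only if there exist holomorphic functions f₁ and f₂ on 𝔻 with f₁(0) = f₂(0) such that f(z,0) = f₁(z) and f(0,z) = f₂(z) for all z ∈ 𝔻. -/
open Metric

noncomputable section

/-- The open unit disc in `ℂ`. -/
def uD : Set ℂ := Metric.ball (0 : ℂ) 1

/-- The union of the two crossed discs `(𝔻 × {0}) ∪ ({0} × 𝔻)` in `ℂ²`. -/
def TT : Set (ℂ × ℂ) := {p | (p.1 ∈ uD ∧ p.2 = 0) ∨ (p.1 = 0 ∧ p.2 ∈ uD)}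

/-- A function is holomorphic on `T` if near every point of `T` it extends to a
holomorphic function on an open neighbourhood. (Only the values on `T` are relevant.) -/
def HoloOnT (f : ℂ × ℂ → ℂ) : Prop :=
  ∀ p ∈ TT, ∃ U : Set (ℂ × ℂ), IsOpen U ∧ p ∈ U ∧
    ∃ F : ℂ × ℂ → ℂ, DifferentiableOn ℂ F U ∧ ∀ q ∈ U ∩ TT, F q = f q

theorem stmt_0 (f : ℂ × ℂ → ℂ) :
    HoloOnT f ↔
      ∃ f₁ f₂ : ℂ → ℂ, DifferentiableOn ℂ f₁ uD ∧ DifferentiableOn ℂ f₂ uD ∧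
        f₁ 0 = f₂ 0 ∧ (∀ z ∈ uD, f (z, 0) = f₁ z) ∧ (∀ z ∈ uD, f (0, z) = f₂ z) := by
  have h0 : (0 : ℂ) ∈ uD := by simp [uD]
  constructor
  · intro hf
    refine ⟨fun z => f (z, 0), fun z => f (0, z), ?_, ?_, rfl, fun z _ => rfl, fun z _ => rfl⟩
    · intro z hz
      obtain ⟨U, hU, hpU, F, hF, hFf⟩ := hf (z, 0) (Or.inl ⟨hz, rfl⟩)
      have hg : DifferentiableAt ℂ (fun w => F (w, (0:ℂ))) z :=
        (hF.differentiableAt (hU.mem_nhds hpU)).comp z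
          ((differentiable_id.prodMk (differentiable_const 0)) z)
      have hev : (fun z => f (z, 0)) =ᶠ[nhds z] (fun w => F (w, (0:ℂ))) := by
        have hV : IsOpen {w : ℂ | (w, (0:ℂ)) ∈ U} :=
          hU.preimage (by continuity)
        filter_upwards [hV.mem_nhds hpU, (isOpen_ball.mem_nhds hz : uD ∈ nhds z)] with w hw hw'
        exact (hFf (w, 0) ⟨hw, Or.inl ⟨hw', rfl⟩⟩).symm
      exact (hg.congr_of_eventuallyEq hev).differentiableWithinAt
    · intro z hz
      obtain ⟨U, hU, hpU, F, hF, hFf⟩ := hf (0, z) (Or.inr ⟨rfl, hz⟩)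
      have hg : DifferentiableAt ℂ (fun w => F ((0:ℂ), w)) z :=
        (hF.differentiableAt (hU.mem_nhds hpU)).comp z
          (((differentiable_const (0:ℂ)).prodMk differentiable_id) z)
      have hev : (fun z => f (0, z)) =ᶠ[nhds z] (fun w => F ((0:ℂ), w)) := by
        have hV : IsOpen {w : ℂ | ((0:ℂ), w) ∈ U} :=
          hU.preimage (by continuity)
        filter_upwards [hV.mem_nhds hpU, (isOpen_ball.mem_nhds hz : uD ∈ nhds z)] with w hw hw'
        exact (hFf (0, w) ⟨hw, Or.inr ⟨rfl, hw'⟩⟩).symm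
      exact (hg.congr_of_eventuallyEq hev).differentiableWithinAt
  · rintro ⟨f₁, f₂, h1, h2, h12, hf1, hf2⟩
    intro p hp
    refine ⟨uD ×ˢ uD, (isOpen_ball.prod isOpen_ball : IsOpen (uD ×ˢ uD)), ?_,
      fun q => f₁ q.1 + f₂ q.2 - f₁ 0, ?_, ?_⟩
    · rcases hp with ⟨hp1, hp2⟩ | ⟨hp1, hp2⟩
      · exact ⟨hp1, hp2 ▸ h0⟩
      · exact ⟨hp1 ▸ h0, hp2⟩
    · exact ((h1.comp differentiableOn_fst fun q hq => hq.1).add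
        (h2.comp differentiableOn_snd fun q hq => hq.2)).sub (differentiableOn_const _)
    · rintro q ⟨hqU, hq1 | hq2⟩
      · obtain ⟨hq1, hq0⟩ := hq1
        rw [show q = (q.1, (0:ℂ)) by rw [← hq0]]
        simp only [hf1 q.1 hq1, h12]
        ring
      · obtain ⟨hq0, hq2⟩ := hq2
        rw [show q = ((0:ℂ), q.2) by rw [← hq0]]
        simp only [hf2 q.2 hq2]
        ring
end
end

section
/- Let G ⊆ ℂ² be open with T ⊆ G, let v = (v₁,v₂) ∈ ℂ² with |v₁|² + |v₂|² = 1, and let r > 0 be such that {ζv : ζ ∈ ℂ, |ζ| < r} ⊆ G. If (G,T) is norm preserving, then r ≤ 1/(|v₁| + |v₂|). -/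
open Metric

noncomputable section

/-- Boundedness on `T`. -/
def BddOnT (f : ℂ × ℂ → ℂ) : Prop := ∃ C : ℝ, ∀ p ∈ TT, ‖f p‖ ≤ C

/-- The supremum of `‖f‖` over a subset of `ℂ²`. -/
def supOn (f : ℂ × ℂ → ℂ) (S : Set (ℂ × ℂ)) : ℝ := sSup ((fun p => ‖f p‖) '' S)

/-- The pair `(G, T)` is norm preserving: every bounded holomorphic function on `T`
has a holomorphic extension to `G` with the same supremum norm. -/
def NormPres (G : Set (ℂ × ℂ)) : Prop :=
  ∀ f : ℂ × ℂ → ℂ, HoloOnT f → BddOnT f →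
    ∃ F : ℂ × ℂ → ℂ, DifferentiableOn ℂ F G ∧ (∀ p ∈ TT, F p = f p) ∧
      supOn F G = supOn f TT


theorem stmt_2 (G : Set (ℂ × ℂ)) (hG : IsOpen G) (hTG : TT ⊆ G)
    (v : ℂ × ℂ) (hv : ‖v.1‖ ^ 2 + ‖v.2‖ ^ 2 = 1) (r : ℝ) (hr : 0 < r)
    (hdisc : ∀ ζ : ℂ, ‖ζ‖ < r → ζ • v ∈ G)
    (hnp : NormPres G) :
    r ≤ 1 / (‖v.1‖ + ‖v.2‖) := by
  classical
  set s : ℝ := ‖v.1‖ + ‖v.2‖ with hs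
  have hs0 : 0 < s := by
    nlinarith [norm_nonneg v.1, norm_nonneg v.2]
  set α : ℂ := if v.1 = 0 then 1 else (starRingEnd ℂ) v.1 / (‖v.1‖ : ℂ) with hαdef
  set β : ℂ := if v.2 = 0 then 1 else (starRingEnd ℂ) v.2 / (‖v.2‖ : ℂ) with hβdef
  have hαnorm : ‖α‖ = 1 := by
    rw [hαdef]; split_ifs with h
    · simp
    · rw [norm_div, RCLike.norm_conj]
      simp only [Complex.norm_real, Real.norm_eq_abs, abs_norm]
      exact div_self (norm_ne_zero_iff.mpr h)
  have hβnorm : ‖β‖ = 1 := by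
    rw [hβdef]; split_ifs with h
    · simp
    · rw [norm_div, RCLike.norm_conj]
      simp only [Complex.norm_real, Real.norm_eq_abs, abs_norm]
      exact div_self (norm_ne_zero_iff.mpr h)
  have hαv : α * v.1 = (‖v.1‖ : ℂ) := by
    rw [hαdef]; split_ifs with h
    · simp [h]
    · have hne : ((‖v.1‖ : ℝ) : ℂ) ≠ 0 := by
        exact_mod_cast norm_ne_zero_iff.mpr h
      rw [div_mul_eq_mul_div, mul_comm, Complex.mul_conj]
      rw [Complex.normSq_eq_norm_sq]
      push_cast
      rw [sq, mul_div_assoc, div_self hne, mul_one]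
  have hβv : β * v.2 = (‖v.2‖ : ℂ) := by
    rw [hβdef]; split_ifs with h
    · simp [h]
    · have hne : ((‖v.2‖ : ℝ) : ℂ) ≠ 0 := by
        exact_mod_cast norm_ne_zero_iff.mpr h
      rw [div_mul_eq_mul_div, mul_comm, Complex.mul_conj]
      rw [Complex.normSq_eq_norm_sq]
      push_cast
      rw [sq, mul_div_assoc, div_self hne, mul_one]
  clear_value s α β
  set f : ℂ × ℂ → ℂ := fun p => α * p.1 + β * p.2 with hfdef
  have hfdiff : Differentiable ℂ f :=
    (differentiable_fst.const_mul α).add (differentiable_snd.const_mul β)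
  have hfT : ∀ p ∈ TT, ‖f p‖ ≤ 1 := by
    rintro p (⟨h1, h2⟩ | ⟨h1, h2⟩)
    · simp only [hfdef, h2, mul_zero, add_zero]
      rw [norm_mul, hαnorm, one_mul]
      exact le_of_lt (by simpa [uD, mem_ball_zero_iff] using h1)
    · simp only [hfdef, h1, mul_zero, zero_add]
      rw [norm_mul, hβnorm, one_mul]
      exact le_of_lt (by simpa [uD, mem_ball_zero_iff] using h2)
  obtain ⟨F, hFdiff, hFT, hFsup⟩ := hnp f
    (fun p _ => ⟨Set.univ, isOpen_univ, Set.mem_univ _, f,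
      hfdiff.differentiableOn, fun q _ => rfl⟩)
    ⟨1, hfT⟩
  have h00T : ((0 : ℂ), (0 : ℂ)) ∈ TT := Or.inl ⟨mem_ball_self one_pos, rfl⟩
  -- supOn f TT = 1
  have hsup1 : supOn f TT = 1 := by
    apply le_antisymm
    · exact Real.sSup_le (by rintro x ⟨p, hp, rfl⟩; exact hfT p hp) zero_le_one
    · by_contra h
      push_neg at h
      set S := (fun p => ‖f p‖) '' TT with hS
      have hbd : BddAbove S := ⟨1, by rintro x ⟨p, hp, rfl⟩; exact hfT p hp⟩
      have h0S : (0 : ℝ) ∈ S := ⟨((0:ℂ),(0:ℂ)), h00T, by simp [hfdef]⟩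
      have hges : (0:ℝ) ≤ sSup S := le_csSup hbd h0S
      set t : ℝ := (sSup S + 1) / 2 with ht
      have ht0 : 0 ≤ t := by positivity
      have ht1 : t < 1 := by simp only [supOn] at h; rw [ht]; linarith
      have htT : (((t:ℂ)), (0:ℂ)) ∈ TT := by
        refine Or.inl ⟨?_, rfl⟩
        simp only [uD, mem_ball_zero_iff]
        simpa [abs_of_nonneg ht0] using ht1
      have htS : t ∈ S := by
        refine ⟨((t:ℂ), 0), htT, ?_⟩
        simp [hfdef, norm_mul, hαnorm, abs_of_nonneg ht0]
      have : t ≤ sSup S := le_csSup hbd htS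
      simp only [supOn] at h
      rw [ht] at this; linarith
  rw [hsup1] at hFsup
  -- F is bounded by 1 on G
  have hFb : ∀ p ∈ G, ‖F p‖ ≤ 1 := by
    have hbd : BddAbove ((fun p => ‖F p‖) '' G) := by
      by_contra h
      have := Real.sSup_of_not_bddAbove h
      rw [supOn] at hFsup
      rw [this] at hFsup; linarith
    intro p hp
    calc ‖F p‖ ≤ sSup ((fun p => ‖F p‖) '' G) := le_csSup hbd ⟨p, hp, rfl⟩
    _ = 1 := hFsup
  -- derivative of F at 0
  have h0G : ((0:ℂ), (0:ℂ)) ∈ G := hTG h00T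
  have hFat : DifferentiableAt ℂ F ((0:ℂ), (0:ℂ)) :=
    hFdiff.differentiableAt (hG.mem_nhds h0G)
  set D := fderiv ℂ F ((0:ℂ), (0:ℂ)) with hD
  have hDat : HasFDerivAt F D ((0:ℂ), (0:ℂ)) := hFat.hasFDerivAt
  -- D (1,0) = α
  have hD1 : D ((1:ℂ), (0:ℂ)) = α := by
    have hl : HasDerivAt (fun z : ℂ => ((z, 0) : ℂ × ℂ)) (((1:ℂ), (0:ℂ))) 0 :=
      (hasDerivAt_id (0:ℂ)).prodMk (hasDerivAt_const (0:ℂ) (0:ℂ))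
    have h1 : HasDerivAt (fun z : ℂ => F (z, 0)) (D ((1:ℂ), (0:ℂ))) 0 :=
      hDat.comp_hasDerivAt_of_eq 0 hl (by simp)
    have heq : (fun z : ℂ => F (z, 0)) =ᶠ[nhds (0:ℂ)] fun z => α * z := by
      filter_upwards [Metric.ball_mem_nhds (0:ℂ) one_pos] with z hz
      have hzT : ((z, 0) : ℂ × ℂ) ∈ TT := Or.inl ⟨by simpa [uD] using hz, rfl⟩
      rw [hFT (z, 0) hzT]
      simp [hfdef]
    have h2 : HasDerivAt (fun z : ℂ => F (z, 0)) α 0 := by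
      have : HasDerivAt (fun z : ℂ => α * z) α 0 := by
        simpa using (hasDerivAt_id (0:ℂ)).const_mul α
      exact this.congr_of_eventuallyEq heq
    exact h1.unique h2
  have hD2 : D ((0:ℂ), (1:ℂ)) = β := by
    have hl : HasDerivAt (fun z : ℂ => ((0, z) : ℂ × ℂ)) (((0:ℂ), (1:ℂ))) 0 :=
      (hasDerivAt_const (0:ℂ) (0:ℂ)).prodMk (hasDerivAt_id (0:ℂ))
    have h1 : HasDerivAt (fun z : ℂ => F (0, z)) (D ((0:ℂ), (1:ℂ))) 0 :=
      hDat.comp_hasDerivAt_of_eq 0 hl (by simp)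
    have heq : (fun z : ℂ => F (0, z)) =ᶠ[nhds (0:ℂ)] fun z => β * z := by
      filter_upwards [Metric.ball_mem_nhds (0:ℂ) one_pos] with z hz
      have hzT : ((0, z) : ℂ × ℂ) ∈ TT := Or.inr ⟨rfl, by simpa [uD] using hz⟩
      rw [hFT (0, z) hzT]
      simp [hfdef]
    have h2 : HasDerivAt (fun z : ℂ => F (0, z)) β 0 := by
      have : HasDerivAt (fun z : ℂ => β * z) β 0 := by
        simpa using (hasDerivAt_id (0:ℂ)).const_mul β
      exact this.congr_of_eventuallyEq heq
    exact h1.unique h2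
  -- the slice function
  set g : ℂ → ℂ := fun ζ => F (ζ • v) with hgdef
  have hgdiff : DifferentiableOn ℂ g (ball (0:ℂ) r) := by
    apply hFdiff.comp ((differentiable_id.smul_const v).differentiableOn)
    intro ζ hζ
    exact hdisc ζ (by simpa [mem_ball_zero_iff] using hζ)
  have hg0 : g 0 = 0 := by
    have : (0:ℂ) • v = ((0:ℂ), (0:ℂ)) := by rw [zero_smul]; rfl
    rw [hgdef]; simp only [this]
    rw [hFT ((0:ℂ),(0:ℂ)) h00T]; simp [hfdef]
  have hgd : HasDerivAt g (D v) 0 := by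
    have hl : HasDerivAt (fun ζ : ℂ => ζ • v) v 0 := by
      simpa using (hasDerivAt_id (0:ℂ)).smul_const v
    have h0v : (0:ℂ) • v = ((0:ℂ), (0:ℂ)) := by rw [zero_smul]; rfl
    exact hDat.comp_hasDerivAt_of_eq 0 hl (by simp)
  have hDv : D v = (s : ℂ) := by
    have hv' : v = v.1 • ((1:ℂ), (0:ℂ)) + v.2 • ((0:ℂ), (1:ℂ)) := by
      apply Prod.ext <;> simp
    rw [hv', map_add, map_smul, map_smul, hD1, hD2, smul_eq_mul, smul_eq_mul,
      mul_comm v.1 α, mul_comm v.2 β, hαv, hβv, hs]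
    push_cast; ring
  have hnormDv : ‖D v‖ = s := by
    rw [hDv, Complex.norm_real, Real.norm_of_nonneg hs0.le]
  -- Schwarz lemma argument: s * r ≤ 1
  have hkey : s * r ≤ 1 := by
    by_contra hlt
    push_neg at hlt
    set R : ℝ := (1 + s * r) / 2 with hR
    have hR1 : 1 < R := by rw [hR]; linarith
    have hRsr : R < s * r := by rw [hR]; linarith
    have hmaps : Set.MapsTo g (ball (0:ℂ) r) (ball (g 0) R) := by
      intro ζ hζ
      rw [hg0, mem_ball_zero_iff]
      have : ‖g ζ‖ ≤ 1 :=
        hFb _ (hdisc ζ (by simpa [mem_ball_zero_iff] using hζ))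
      linarith
    have hschwarz := Complex.norm_deriv_le_div_of_mapsTo_ball hgdiff (hmaps.mono_right ball_subset_closedBall) hr
    rw [hgd.deriv, hnormDv] at hschwarz
    have hsle : s * r ≤ R := (le_div_iff₀ hr).mp hschwarz
    linarith
  rw [le_div_iff₀ hs0]
  linarith [hkey]
end
end

section
/- Let G ⊆ ℂ² be a balanced open set with T ⊆ G. Then (G,T) is norm preserving if and only if G ⊆ Δ = {λ ∈ ℂ² : |λ₁| + |λ₂| < 1}. -/
open Metric

noncomputable section

/-- The domain `Δ = {λ ∈ ℂ² : |λ₁| + |λ₂| < 1}`. -/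
def Delta : Set (ℂ × ℂ) := {p | ‖p.1‖ + ‖p.2‖ < 1}

lemma mem_uD {z : ℂ} : z ∈ uD ↔ ‖z‖ < 1 := mem_ball_zero_iff

lemma zero_mem_TT : ((0 : ℂ), (0 : ℂ)) ∈ TT := Or.inl ⟨mem_uD.mpr (by simp), rfl⟩

lemma exists_align (z : ℂ) : ∃ α : ℂ, ‖α‖ = 1 ∧ α * z = (‖z‖ : ℂ) := by
  by_cases h : z = 0
  · exact ⟨1, norm_one, by simp [h]⟩
  refine ⟨(starRingEnd ℂ) z / ‖z‖, ?_, ?_⟩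
  · simp [norm_div, h]
  · rw [div_mul_eq_mul_div, mul_comm, Complex.mul_conj]
    rw [Complex.normSq_eq_norm_sq, Complex.ofReal_pow]
    have h0 : ((‖z‖ : ℂ)) ≠ 0 := by
      exact_mod_cast norm_ne_zero_iff.mpr h
    rw [sq]
    field_simp

lemma weak_bound (G : Set (ℂ × ℂ)) (hG : IsOpen G) (hbal : Balanced ℂ G) (hTG : TT ⊆ G)
    (hNP : NormPres G) (lam : ℂ × ℂ) (hlam : lam ∈ G) : ‖lam.1‖ + ‖lam.2‖ ≤ 1 := by
  classical
  obtain ⟨α, hα1, hα⟩ := exists_align lam.1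
  obtain ⟨β, hβ1, hβ⟩ := exists_align lam.2
  set f : ℂ × ℂ → ℂ := fun p => α * p.1 + β * p.2 with hf
  have hdiff : Differentiable ℂ f :=
    (differentiable_fst.const_mul α).add (differentiable_snd.const_mul β)
  have hfTT : ∀ p ∈ TT, ‖f p‖ ≤ 1 := by
    rintro ⟨z, w⟩ (⟨hz, hw⟩ | ⟨hz, hw⟩)
    · simp only [hf] at *
      rw [show w = 0 from hw]
      simp only [mul_zero, add_zero, norm_mul, hα1, one_mul]
      exact (mem_uD.mp hz).le
    · simp only [hf] at *
      rw [show z = 0 from hz]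
      simp only [mul_zero, zero_add, norm_mul, hβ1, one_mul]
      exact (mem_uD.mp hw).le
  obtain ⟨F, hFd, hFeq, hFsup⟩ := hNP f
    (fun p _ => ⟨Set.univ, isOpen_univ, trivial, f, hdiff.differentiableOn, fun q _ => rfl⟩)
    ⟨1, hfTT⟩
  -- supOn f TT = 1
  have hsup1 : supOn f TT = 1 := by
    have hne : ((fun p => ‖f p‖) '' TT).Nonempty := ⟨_, ⟨_, zero_mem_TT, rfl⟩⟩
    have hbdd : BddAbove ((fun p => ‖f p‖) '' TT) := by
      refine ⟨1, ?_⟩; rintro x ⟨p, hp, rfl⟩; exact hfTT p hp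
    refine le_antisymm (csSup_le hne ?_) ?_
    · rintro x ⟨p, hp, rfl⟩; exact hfTT p hp
    · refine le_of_forall_lt fun x hx => ?_
      set r : ℝ := (max x 0 + 1) / 2 with hr
      have hr0 : 0 ≤ r := by positivity
      have hxr : x < r := lt_of_le_of_lt (le_max_left x 0) (by
        have := max_lt hx one_pos; simp only [hr]; linarith [le_max_left x 0, max_lt hx one_pos])
      have hr1 : r < 1 := by
        have h1 : max x 0 < 1 := max_lt hx one_pos
        simp only [hr]; linarith
      have hrc : ‖((r:ℝ) : ℂ)‖ < 1 := by
        rw [Complex.norm_real, Real.norm_of_nonneg hr0]; exact hr1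
      have hca : α * (starRingEnd ℂ) α = 1 := by
        rw [Complex.mul_conj', hα1]
        norm_num
      have hmem : ((r : ℂ) * (starRingEnd ℂ) α, (0:ℂ)) ∈ TT := by
        refine Or.inl ⟨mem_uD.mpr ?_, rfl⟩
        rw [norm_mul, RCLike.norm_conj, hα1, mul_one]
        exact hrc
      have hval : ‖f ((r : ℂ) * (starRingEnd ℂ) α, 0)‖ = r := by
        simp only [hf, mul_zero, add_zero]
        rw [show α * ((r:ℂ) * (starRingEnd ℂ) α) = (r:ℂ) * (α * (starRingEnd ℂ) α) by ring,
          hca, mul_one, Complex.norm_real, Real.norm_of_nonneg hr0]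
      calc x < r := hxr
        _ ≤ _ := by
          rw [← hval]; exact le_csSup hbdd ⟨_, hmem, rfl⟩
  -- extension has norm ≤ 1 on G
  have hFsup1 : supOn F G = 1 := hFsup.trans hsup1
  have hbddF : BddAbove ((fun p => ‖F p‖) '' G) := by
    by_contra h
    rw [supOn, Real.sSup_of_not_bddAbove h] at hFsup1
    norm_num at hFsup1
  have hF1 : ∀ p ∈ G, ‖F p‖ ≤ 1 := fun p hp => hFsup1 ▸ le_csSup hbddF ⟨p, hp, rfl⟩
  have h0G : ((0:ℂ), (0:ℂ)) ∈ G := hTG zero_mem_TT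
  have hmemG : ∀ ζ : ℂ, ‖ζ‖ ≤ 1 → ζ • lam ∈ G := fun ζ hζ =>
    hbal ζ hζ (Set.smul_mem_smul_set hlam)
  set φ : ℂ → ℂ := fun ζ => F (ζ • lam) with hφ
  have hφdiff : DifferentiableOn ℂ φ (ball (0:ℂ) 1) := by
    intro ζ hζ
    have h1 : DifferentiableAt ℂ F (ζ • lam) :=
      hFd.differentiableAt (hG.mem_nhds (hmemG ζ (mem_ball_zero_iff.mp hζ).le))
    exact (h1.comp ζ ((differentiable_id.smul_const lam) ζ)).differentiableWithinAt
  have hφ0 : φ 0 = 0 := by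
    simp only [hφ, zero_smul]
    rw [show ((0 : ℂ × ℂ)) = ((0:ℂ),(0:ℂ)) from rfl, hFeq _ zero_mem_TT, hf]
    simp
  have hφle : ∀ ζ ∈ ball (0:ℂ) 1, ‖φ ζ‖ ≤ 1 := fun ζ hζ =>
    hF1 _ (hmemG ζ (mem_ball_zero_iff.mp hζ).le)
  have hFat : HasFDerivAt F (fderiv ℂ F ((0:ℂ),(0:ℂ))) ((0:ℂ),(0:ℂ)) :=
    (hFd.differentiableAt (hG.mem_nhds h0G)).hasFDerivAt
  have hsm : HasDerivAt (fun ζ : ℂ => ζ • lam) lam 0 := by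
    simpa using (hasDerivAt_id (0:ℂ)).smul_const lam
  have hFat' : HasFDerivAt F (fderiv ℂ F ((0:ℂ),(0:ℂ))) ((0:ℂ) • lam) := by
    rw [zero_smul]; exact hFat
  have hder : HasDerivAt φ (fderiv ℂ F ((0:ℂ),(0:ℂ)) lam) 0 := by
    have h2 := HasFDerivAt.comp_hasDerivAt (f := fun ζ : ℂ => ζ • lam) 0 hFat' hsm
    simpa [hφ, Function.comp_def] using h2
  -- Schwarz-type estimate
  have hkey : ∀ r : ℝ, 0 < r → r < 1 → ‖deriv φ 0‖ ≤ 1 / r := by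
    intro r hr0 hr1
    refine le_of_forall_pos_le_add fun ε hε => ?_
    have hd : DifferentiableOn ℂ φ (ball (0:ℂ) r) :=
      hφdiff.mono (ball_subset_ball hr1.le)
    have hmaps : Set.MapsTo φ (ball (0:ℂ) r) (ball (φ 0) (1 + ε * r)) := by
      intro ζ hζ
      rw [hφ0, mem_ball_zero_iff]
      calc ‖φ ζ‖ ≤ 1 := hφle ζ (ball_subset_ball hr1.le hζ)
        _ < 1 + ε * r := by nlinarith
    have := Complex.norm_dslope_le_div_of_mapsTo_ball hd (hmaps.mono_right ball_subset_closedBall) (mem_ball_self hr0)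
    rw [dslope_same] at this
    calc ‖deriv φ 0‖ ≤ (1 + ε * r) / r := this
      _ = 1 / r + ε := by field_simp
  have hder1 : ‖deriv φ 0‖ ≤ 1 := by
    by_contra h
    push_neg at h
    have hd0 : 0 < ‖deriv φ 0‖ := lt_trans one_pos h
    set r : ℝ := (1 + 1 / ‖deriv φ 0‖) / 2 with hr
    have hinv : 1 / ‖deriv φ 0‖ < 1 := by
      rw [div_lt_one hd0]; exact h
    have hr0 : 0 < r := by positivity
    have hr1 : r < 1 := by rw [hr]; linarith
    have := hkey r hr0 hr1
    have h2 : 1 / r < ‖deriv φ 0‖ := by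
      rw [div_lt_iff₀ hr0, hr]
      have h3 : 1 / ‖deriv φ 0‖ * ‖deriv φ 0‖ = 1 := one_div_mul_cancel (ne_of_gt hd0)
      nlinarith
    linarith
  -- compute the derivative
  have hd1 : fderiv ℂ F ((0:ℂ),(0:ℂ)) ((1:ℂ),(0:ℂ)) = α := by
    have hsl : HasDerivAt (fun z : ℂ => F (z, (0:ℂ)))
        (fderiv ℂ F ((0:ℂ),(0:ℂ)) ((1:ℂ),(0:ℂ))) 0 := by
      have hpr : HasDerivAt (fun z : ℂ => (z, (0:ℂ))) (((1:ℂ),(0:ℂ))) 0 :=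
        (hasDerivAt_id (0:ℂ)).prodMk (hasDerivAt_const (0:ℂ) (0:ℂ))
      have h2 := HasFDerivAt.comp_hasDerivAt (f := fun z : ℂ => (z, (0:ℂ))) 0 hFat hpr
      simpa [Function.comp_def] using h2
    have hev : (fun z : ℂ => F (z, (0:ℂ))) =ᶠ[nhds (0:ℂ)] fun z => α * z := by
      filter_upwards [isOpen_ball.mem_nhds (mem_ball_self one_pos)] with z hz
      rw [hFeq (z,0) (Or.inl ⟨hz, rfl⟩), hf]; simp
    have hsl2 : HasDerivAt (fun z : ℂ => α * z)
        (fderiv ℂ F ((0:ℂ),(0:ℂ)) ((1:ℂ),(0:ℂ))) 0 := hsl.congr_of_eventuallyEq hev.symm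
    have hsl3 : HasDerivAt (fun z : ℂ => α * z) α 0 := by
      simpa using (hasDerivAt_id (0:ℂ)).const_mul α
    exact (hsl3.unique hsl2).symm
  have hd2 : fderiv ℂ F ((0:ℂ),(0:ℂ)) ((0:ℂ),(1:ℂ)) = β := by
    have hsl : HasDerivAt (fun w : ℂ => F ((0:ℂ), w))
        (fderiv ℂ F ((0:ℂ),(0:ℂ)) ((0:ℂ),(1:ℂ))) 0 := by
      have hpr : HasDerivAt (fun w : ℂ => ((0:ℂ), w)) (((0:ℂ),(1:ℂ))) 0 :=
        (hasDerivAt_const (0:ℂ) (0:ℂ)).prodMk (hasDerivAt_id (0:ℂ))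
      have h2 := HasFDerivAt.comp_hasDerivAt (f := fun w : ℂ => ((0:ℂ), w)) 0 hFat hpr
      simpa [Function.comp_def] using h2
    have hev : (fun w : ℂ => F ((0:ℂ), w)) =ᶠ[nhds (0:ℂ)] fun w => β * w := by
      filter_upwards [isOpen_ball.mem_nhds (mem_ball_self one_pos)] with w hw
      rw [hFeq (0,w) (Or.inr ⟨rfl, hw⟩), hf]; simp
    have hsl2 : HasDerivAt (fun w : ℂ => β * w)
        (fderiv ℂ F ((0:ℂ),(0:ℂ)) ((0:ℂ),(1:ℂ))) 0 := hsl.congr_of_eventuallyEq hev.symm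
    have hsl3 : HasDerivAt (fun w : ℂ => β * w) β 0 := by
      simpa using (hasDerivAt_id (0:ℂ)).const_mul β
    exact (hsl3.unique hsl2).symm
  have hlam_split : lam = lam.1 • (((1:ℂ),(0:ℂ)) : ℂ × ℂ) + lam.2 • (((0:ℂ),(1:ℂ)) : ℂ × ℂ) := by
    ext <;> simp
  have hcalc : fderiv ℂ F ((0:ℂ),(0:ℂ)) lam = ((‖lam.1‖ + ‖lam.2‖ : ℝ) : ℂ) := by
    conv_lhs => rw [hlam_split]
    rw [map_add, map_smul, map_smul, hd1, hd2, smul_eq_mul, smul_eq_mul,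
      mul_comm lam.1 α, mul_comm lam.2 β, hα, hβ]
    push_cast
    ring
  have hderiv_val : deriv φ 0 = ((‖lam.1‖ + ‖lam.2‖ : ℝ) : ℂ) := by
    rw [hder.deriv, hcalc]
  rw [hderiv_val] at hder1
  rwa [Complex.norm_real, Real.norm_of_nonneg (by positivity)] at hder1

lemma forward_dir (G : Set (ℂ × ℂ)) (hG : IsOpen G) (hbal : Balanced ℂ G) (hTG : TT ⊆ G)
    (hNP : NormPres G) : G ⊆ Delta := by
  intro lam hlam
  have hle := weak_bound G hG hbal hTG hNP lam hlam
  by_contra h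
  have hsum : ‖lam.1‖ + ‖lam.2‖ = 1 := le_antisymm hle (by
    simpa [Delta, not_lt] using h)
  obtain ⟨ε, hε, hball⟩ := Metric.isOpen_iff.mp hG lam hlam
  set δ : ℝ := ε / (‖lam‖ + 1) with hδ
  have hδ0 : 0 < δ := by positivity
  set c : ℂ := ((1 + δ : ℝ) : ℂ) with hc
  have hmem : c • lam ∈ G := by
    apply hball
    rw [mem_ball, dist_eq_norm]
    have : c • lam - lam = ((δ : ℝ) : ℂ) • lam := by
      rw [hc]; push_cast
      rw [show lam = (1:ℂ) • lam from (one_smul ℂ lam).symm]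
      rw [smul_smul, ← sub_smul]
      norm_num
    rw [this, norm_smul, Complex.norm_real, Real.norm_of_nonneg hδ0.le]
    calc δ * ‖lam‖ < δ * (‖lam‖ + 1) := by nlinarith
      _ = ε := by rw [hδ]; field_simp
  have h2 := weak_bound G hG hbal hTG hNP (c • lam) hmem
  have hc_norm : ‖c‖ = 1 + δ := by
    rw [hc, Complex.norm_real, Real.norm_of_nonneg (by positivity)]
  rw [Prod.smul_fst, Prod.smul_snd, smul_eq_mul, smul_eq_mul, norm_mul, norm_mul,
    ← mul_add, hsum, mul_one, hc_norm] at h2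
  linarith

lemma slice_left (f : ℂ × ℂ → ℂ) (hf : HoloOnT f) :
    DifferentiableOn ℂ (fun z => f (z, 0)) uD := by
  intro z hz
  obtain ⟨U, hUo, hUm, Fl, hFld, hFleq⟩ := hf (z, 0) (Or.inl ⟨hz, rfl⟩)
  have hV : IsOpen {w : ℂ | (w, (0:ℂ)) ∈ U} :=
    hUo.preimage (continuous_id.prodMk continuous_const)
  have hdiff : DifferentiableAt ℂ (fun w => Fl (w, (0:ℂ))) z :=
    (hFld.differentiableAt (hUo.mem_nhds hUm)).comp z
      (differentiableAt_id.prodMk (differentiableAt_const (0:ℂ)))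
  have hev : (fun w => f (w, (0:ℂ))) =ᶠ[nhds z] (fun w => Fl (w, (0:ℂ))) := by
    filter_upwards [hV.mem_nhds hUm, isOpen_ball.mem_nhds hz] with w hw1 hw2
    exact (hFleq (w, 0) ⟨hw1, Or.inl ⟨hw2, rfl⟩⟩).symm
  exact (hdiff.congr_of_eventuallyEq hev).differentiableWithinAt

lemma slice_right (f : ℂ × ℂ → ℂ) (hf : HoloOnT f) :
    DifferentiableOn ℂ (fun w => f (0, w)) uD := by
  intro z hz
  obtain ⟨U, hUo, hUm, Fl, hFld, hFleq⟩ := hf (0, z) (Or.inr ⟨rfl, hz⟩)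
  have hV : IsOpen {w : ℂ | ((0:ℂ), w) ∈ U} :=
    hUo.preimage (continuous_const.prodMk continuous_id)
  have hdiff : DifferentiableAt ℂ (fun w => Fl ((0:ℂ), w)) z :=
    (hFld.differentiableAt (hUo.mem_nhds hUm)).comp z
      ((differentiableAt_const (0:ℂ)).prodMk differentiableAt_id)
  have hev : (fun w => f ((0:ℂ), w)) =ᶠ[nhds z] (fun w => Fl ((0:ℂ), w)) := by
    filter_upwards [hV.mem_nhds hUm, isOpen_ball.mem_nhds hz] with w hw1 hw2
    exact (hFleq (0, w) ⟨hw1, Or.inr ⟨rfl, hw2⟩⟩).symm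
  exact (hdiff.congr_of_eventuallyEq hev).differentiableWithinAt

lemma sup_eq_aux (G : Set (ℂ × ℂ)) (hTG : TT ⊆ G) (f F : ℂ × ℂ → ℂ)
    (hFM : ∀ p ∈ G, ‖F p‖ ≤ supOn f TT) (hFeq : ∀ p ∈ TT, F p = f p) :
    supOn F G = supOn f TT := by
  have hBsub : (fun p => ‖f p‖) '' TT ⊆ (fun p => ‖F p‖) '' G := by
    rintro x ⟨p, hp, rfl⟩; exact ⟨p, hTG hp, by simp only [hFeq p hp]⟩
  refine le_antisymm (csSup_le ⟨_, ⟨((0:ℂ),(0:ℂ)), hTG zero_mem_TT, rfl⟩⟩ ?_)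
    (csSup_le_csSup ?_ ⟨_, ⟨((0:ℂ),(0:ℂ)), zero_mem_TT, rfl⟩⟩ hBsub)
  · rintro x ⟨p, hp, rfl⟩; exact hFM p hp
  · exact ⟨supOn f TT, by rintro x ⟨p, hp, rfl⟩; exact hFM p hp⟩

lemma mob_le (M : ℝ) (c w : ℂ) (hc : ‖c‖ ≤ M) (hw : ‖w‖ ≤ M) :
    ‖((M:ℂ))^2 * (w + c)‖ ≤ M * ‖((M:ℂ))^2 + (starRingEnd ℂ) c * w‖ := by
  have hM : 0 ≤ M := le_trans (norm_nonneg c) hc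
  have h2 : (0:ℝ) ≤ M * ‖((M:ℂ))^2 + (starRingEnd ℂ) c * w‖ :=
    mul_nonneg hM (norm_nonneg _)
  rw [← Real.sqrt_sq (norm_nonneg (((M:ℂ))^2 * (w + c))), ← Real.sqrt_sq h2]
  apply Real.sqrt_le_sqrt
  rw [mul_pow, Complex.sq_norm, Complex.sq_norm]
  have hc2 : c.re^2 + c.im^2 ≤ M^2 := by
    have h : ‖c‖ ^ 2 ≤ M ^ 2 :=
      pow_le_pow_left₀ (norm_nonneg c) hc 2
    rw [Complex.sq_norm, Complex.normSq_apply] at h; nlinarith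
  have hw2 : w.re^2 + w.im^2 ≤ M^2 := by
    have h : ‖w‖ ^ 2 ≤ M ^ 2 :=
      pow_le_pow_left₀ (norm_nonneg w) hw 2
    rw [Complex.sq_norm, Complex.normSq_apply] at h; nlinarith
  rw [show ((M:ℂ))^2 = ((M^2 : ℝ) : ℂ) by push_cast; ring]
  simp only [Complex.normSq_apply, Complex.add_re, Complex.add_im, Complex.mul_re,
    Complex.mul_im, Complex.ofReal_re, Complex.ofReal_im, Complex.conj_re, Complex.conj_im]
  nlinarith [mul_nonneg (mul_nonneg (mul_nonneg hM hM) (sub_nonneg.mpr hc2)) (sub_nonneg.mpr hw2)]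

lemma TT_sub_Delta : TT ⊆ Delta := by
  rintro ⟨z, w⟩ (⟨hz, hw⟩ | ⟨hz, hw⟩)
  · simp only [Delta, Set.mem_setOf_eq]
    rw [show w = 0 from hw]
    simpa using mem_uD.mp hz
  · simp only [Delta, Set.mem_setOf_eq]
    rw [show z = 0 from hz]
    simpa using mem_uD.mp hw

lemma backward_dir (G : Set (ℂ × ℂ)) (hTG : TT ⊆ G) (hGD : G ⊆ Delta) : NormPres G := by
  intro f hf hbdd
  set g : ℂ → ℂ := fun z => f (z, 0) with hg
  set h : ℂ → ℂ := fun w => f (0, w) with hh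
  set c : ℂ := f (0, 0) with hc
  set M : ℝ := supOn f TT with hM
  have hbddim : BddAbove ((fun p => ‖f p‖) '' TT) := by
    obtain ⟨C, hC⟩ := hbdd
    exact ⟨C, by rintro x ⟨p, hp, rfl⟩; exact hC p hp⟩
  have hfM : ∀ p ∈ TT, ‖f p‖ ≤ M := fun p hp => le_csSup hbddim ⟨p, hp, rfl⟩
  have hcM : ‖c‖ ≤ M := hfM _ zero_mem_TT
  have hM0 : 0 ≤ M := le_trans (norm_nonneg _) hcM
  have hgd : DifferentiableOn ℂ g uD := slice_left f hf
  have hhd : DifferentiableOn ℂ h uD := slice_right f hf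
  have hgM : ∀ z ∈ uD, ‖g z‖ ≤ M := fun z hz => hfM (z,0) (Or.inl ⟨hz, rfl⟩)
  have hhM : ∀ w ∈ uD, ‖h w‖ ≤ M := fun w hw => hfM (0,w) (Or.inr ⟨rfl, hw⟩)
  have h0uD : (0:ℂ) ∈ uD := mem_uD.mpr (by simp)
  have hfTT : ∀ p ∈ TT, f p = (if p.1 = 0 then h p.2 else g p.1) := by
    rintro ⟨z, w⟩ (⟨hz, hw⟩ | ⟨hz, hw⟩)
    · by_cases h0 : z = 0
      · simp only [h0, if_pos rfl]
        rw [show w = 0 from hw]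
        try rfl
      · simp only [if_neg h0]
        rw [show w = 0 from hw]
        try rfl
    · rw [show z = 0 from hz]; simp [hh]
  rcases eq_or_lt_of_le hcM with hceq | hclt
  · -- constant case
    have hgc : Set.EqOn g (Function.const ℂ (g 0)) uD := by
      apply Complex.eqOn_of_isPreconnected_of_isMaxOn_norm
        (convex_ball (0:ℂ) 1).isPreconnected isOpen_ball hgd h0uD
      intro z hz
      simp only [Function.comp]
      calc ‖g z‖ ≤ M := hgM z hz
        _ = ‖g 0‖ := hceq.symm
    have hhc : Set.EqOn h (Function.const ℂ (h 0)) uD := by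
      apply Complex.eqOn_of_isPreconnected_of_isMaxOn_norm
        (convex_ball (0:ℂ) 1).isPreconnected isOpen_ball hhd h0uD
      intro w hw
      simp only [Function.comp]
      calc ‖h w‖ ≤ M := hhM w hw
        _ = ‖h 0‖ := hceq.symm
    have hfc : ∀ p ∈ TT, f p = c := by
      rintro ⟨z, w⟩ hp
      rcases hp with ⟨hz, hw⟩ | ⟨hz, hw⟩
      · rw [show w = 0 from hw]
        exact hgc hz
      · rw [show z = 0 from hz]
        exact hhc hw
    refine ⟨fun _ => c, differentiableOn_const c, fun p hp => (hfc p hp).symm, ?_⟩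
    exact sup_eq_aux G hTG f (fun _ => c)
      (fun p _ => hceq.le) (fun p hp => (hfc p hp).symm)
  · -- main case : ‖c‖ < M
    have hMpos : 0 < M := lt_of_le_of_lt (norm_nonneg c) hclt
    have hM2 : ((M:ℂ))^2 ≠ 0 :=
      pow_ne_zero 2 (by exact_mod_cast ne_of_gt hMpos)
    -- denominators for the Möbius transform of g and h
    have hden : ∀ z ∈ uD, ((M:ℂ))^2 - (starRingEnd ℂ) c * g z ≠ 0 := by
      intro z hz hcon
      have h1 : ((M:ℂ))^2 = (starRingEnd ℂ) c * g z := by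
        linear_combination hcon
      have h2 : M^2 ≤ ‖c‖ * M := by
        calc M^2 = ‖((M:ℂ))^2‖ := by
              rw [norm_pow, Complex.norm_real, Real.norm_of_nonneg hM0]
          _ = ‖(starRingEnd ℂ) c * g z‖ := by rw [h1]
          _ ≤ ‖c‖ * M := by
              rw [norm_mul, RCLike.norm_conj]
              exact mul_le_mul_of_nonneg_left (hgM z hz) (norm_nonneg c)
      nlinarith
    have hdenh : ∀ w ∈ uD, ((M:ℂ))^2 - (starRingEnd ℂ) c * h w ≠ 0 := by
      intro w hw hcon
      have h1 : ((M:ℂ))^2 = (starRingEnd ℂ) c * h w := by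
        linear_combination hcon
      have h2 : M^2 ≤ ‖c‖ * M := by
        calc M^2 = ‖((M:ℂ))^2‖ := by
              rw [norm_pow, Complex.norm_real, Real.norm_of_nonneg hM0]
          _ = ‖(starRingEnd ℂ) c * h w‖ := by rw [h1]
          _ ≤ ‖c‖ * M := by
              rw [norm_mul, RCLike.norm_conj]
              exact mul_le_mul_of_nonneg_left (hhM w hw) (norm_nonneg c)
      nlinarith
    set Gt : ℂ → ℂ := fun z => ((M:ℂ))^2 * (g z - c) / (((M:ℂ))^2 - (starRingEnd ℂ) c * g z)
      with hGt
    set Ht : ℂ → ℂ := fun w => ((M:ℂ))^2 * (h w - c) / (((M:ℂ))^2 - (starRingEnd ℂ) c * h w)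
      with hHt
    have hGtd : DifferentiableOn ℂ Gt uD :=
      ((differentiableOn_const _).mul (hgd.sub_const c)).div
        ((differentiableOn_const _).sub ((differentiableOn_const _).mul hgd)) hden
    have hHtd : DifferentiableOn ℂ Ht uD :=
      ((differentiableOn_const _).mul (hhd.sub_const c)).div
        ((differentiableOn_const _).sub ((differentiableOn_const _).mul hhd)) hdenh
    have hGt0 : Gt 0 = 0 := by
      simp only [hGt]
      rw [show g 0 = c from rfl]
      simp
    have hHt0 : Ht 0 = 0 := by
      simp only [hHt]
      rw [show h 0 = c from rfl]
      simp
    have hGtM : ∀ z ∈ uD, ‖Gt z‖ ≤ M := by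
      intro z hz
      have hdpos : 0 < ‖((M:ℂ))^2 - (starRingEnd ℂ) c * g z‖ :=
        norm_pos_iff.mpr (hden z hz)
      rw [hGt]
      simp only
      rw [norm_div, div_le_iff₀ hdpos]
      have hmb := mob_le M c (-(g z)) hcM (by rw [norm_neg]; exact hgM z hz)
      have e1 : ((M:ℂ))^2 * (g z - c) = -(((M:ℂ))^2 * ((-(g z)) + c)) := by ring
      have e2 : ((M:ℂ))^2 - (starRingEnd ℂ) c * g z
          = ((M:ℂ))^2 + (starRingEnd ℂ) c * (-(g z)) := by ring
      rw [e1, norm_neg, e2]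
      exact hmb
    have hHtM : ∀ w ∈ uD, ‖Ht w‖ ≤ M := by
      intro w hw
      have hdpos : 0 < ‖((M:ℂ))^2 - (starRingEnd ℂ) c * h w‖ :=
        norm_pos_iff.mpr (hdenh w hw)
      rw [hHt]
      simp only
      rw [norm_div, div_le_iff₀ hdpos]
      have hmb := mob_le M c (-(h w)) hcM (by rw [norm_neg]; exact hhM w hw)
      have e1 : ((M:ℂ))^2 * (h w - c) = -(((M:ℂ))^2 * ((-(h w)) + c)) := by ring
      have e2 : ((M:ℂ))^2 - (starRingEnd ℂ) c * h w
          = ((M:ℂ))^2 + (starRingEnd ℂ) c * (-(h w)) := by ring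
      rw [e1, norm_neg, e2]
      exact hmb
    -- Schwarz bounds for the difference quotients
    have hGds : ∀ s ∈ uD, ‖dslope Gt 0 s‖ ≤ M := by
      intro s hs
      refine le_of_forall_pos_le_add fun ε hε => ?_
      have hmaps : Set.MapsTo Gt (ball (0:ℂ) 1) (ball (Gt 0) (M + ε)) := by
        intro z hz
        rw [hGt0, mem_ball_zero_iff]
        exact lt_of_le_of_lt (hGtM z hz) (by linarith)
      have h2 := Complex.norm_dslope_le_div_of_mapsTo_ball hGtd (hmaps.mono_right ball_subset_closedBall) hs
      simpa using h2
    have hHds : ∀ s ∈ uD, ‖dslope Ht 0 s‖ ≤ M := by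
      intro s hs
      refine le_of_forall_pos_le_add fun ε hε => ?_
      have hmaps : Set.MapsTo Ht (ball (0:ℂ) 1) (ball (Ht 0) (M + ε)) := by
        intro z hz
        rw [hHt0, mem_ball_zero_iff]
        exact lt_of_le_of_lt (hHtM z hz) (by linarith)
      have h2 := Complex.norm_dslope_le_div_of_mapsTo_ball hHtd (hmaps.mono_right ball_subset_closedBall) hs
      simpa using h2
    set I : ℂ × ℂ → ℂ :=
      fun p => p.1 * dslope Gt 0 (p.1 + p.2) + p.2 * dslope Ht 0 (p.1 + p.2) with hI
    have hsum_mem : ∀ p : ℂ × ℂ, p ∈ Delta → p.1 + p.2 ∈ uD := by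
      intro p hp
      rw [mem_uD]
      calc ‖p.1 + p.2‖ ≤ ‖p.1‖ + ‖p.2‖ := norm_add_le _ _
        _ < 1 := hp
    have hInorm : ∀ p ∈ Delta, ‖I p‖ ≤ (‖p.1‖ + ‖p.2‖) * M := by
      intro p hp
      calc ‖I p‖ ≤ ‖p.1 * dslope Gt 0 (p.1 + p.2)‖ + ‖p.2 * dslope Ht 0 (p.1 + p.2)‖ :=
            norm_add_le _ _
        _ ≤ ‖p.1‖ * M + ‖p.2‖ * M := add_le_add
            (by rw [norm_mul]
                exact mul_le_mul_of_nonneg_left (hGds _ (hsum_mem p hp)) (norm_nonneg _))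
            (by rw [norm_mul]
                exact mul_le_mul_of_nonneg_left (hHds _ (hsum_mem p hp)) (norm_nonneg _))
        _ = (‖p.1‖ + ‖p.2‖) * M := by ring
    have hIlt : ∀ p ∈ Delta, ‖I p‖ < M := by
      intro p hp
      have h1 := hInorm p hp
      have h2 : ‖p.1‖ + ‖p.2‖ < 1 := hp
      have h3 : (0:ℝ) ≤ ‖p.1‖ + ‖p.2‖ := by positivity
      nlinarith
    have hIdiff : DifferentiableOn ℂ I Delta := by
      have hq : DifferentiableOn ℂ (fun p : ℂ × ℂ => p.1 + p.2) Delta :=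
        (differentiable_fst.add differentiable_snd).differentiableOn
      have hdsG : DifferentiableOn ℂ (dslope Gt 0) uD :=
        (Complex.differentiableOn_dslope (isOpen_ball.mem_nhds h0uD)).mpr hGtd
      have hdsH : DifferentiableOn ℂ (dslope Ht 0) uD :=
        (Complex.differentiableOn_dslope (isOpen_ball.mem_nhds h0uD)).mpr hHtd
      have hcompG : DifferentiableOn ℂ (fun p : ℂ × ℂ => dslope Gt 0 (p.1 + p.2)) Delta :=
        hdsG.comp hq fun p hp => hsum_mem p hp
      have hcompH : DifferentiableOn ℂ (fun p : ℂ × ℂ => dslope Ht 0 (p.1 + p.2)) Delta :=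
        hdsH.comp hq fun p hp => hsum_mem p hp
      exact ((differentiable_fst.differentiableOn).mul hcompG).add
        ((differentiable_snd.differentiableOn).mul hcompH)
    have hden2 : ∀ p ∈ Delta, ((M:ℂ))^2 + (starRingEnd ℂ) c * I p ≠ 0 := by
      intro p hp hcon
      have h1 : ((M:ℂ))^2 = -((starRingEnd ℂ) c * I p) := by linear_combination hcon
      have h2 : M^2 ≤ ‖c‖ * ‖I p‖ := by
        calc M^2 = ‖((M:ℂ))^2‖ := by
              rw [norm_pow, Complex.norm_real, Real.norm_of_nonneg hM0]
          _ = ‖(starRingEnd ℂ) c * I p‖ := by rw [h1, norm_neg]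
          _ ≤ ‖c‖ * ‖I p‖ := le_of_eq (by rw [norm_mul, RCLike.norm_conj])
      have h3 := hIlt p hp
      nlinarith [norm_nonneg (I p), norm_nonneg c]
    set F : ℂ × ℂ → ℂ :=
      fun p => ((M:ℂ))^2 * (I p + c) / (((M:ℂ))^2 + (starRingEnd ℂ) c * I p) with hF
    have hFdD : DifferentiableOn ℂ F Delta := by
      rw [hF]
      simp only [div_eq_mul_inv]
      exact ((hIdiff.add_const c).const_mul (((M:ℂ))^2)).mul
        (((hIdiff.const_mul ((starRingEnd ℂ) c)).const_add (((M:ℂ))^2)).inv hden2)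
    have hFd : DifferentiableOn ℂ F G := hFdD.mono hGD
    have hFM : ∀ p ∈ G, ‖F p‖ ≤ M := by
      intro p hp
      have hpD := hGD hp
      have hdpos : 0 < ‖((M:ℂ))^2 + (starRingEnd ℂ) c * I p‖ :=
        norm_pos_iff.mpr (hden2 p hpD)
      rw [hF]
      simp only
      rw [norm_div, div_le_iff₀ hdpos]
      exact mob_le M c (I p) hcM (hIlt p hpD).le
    have hFeq : ∀ p ∈ TT, F p = f p := by
      rintro ⟨z, w⟩ hp
      rcases hp with ⟨hz, hw⟩ | ⟨hz, hw⟩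
      · simp only at hz hw
        subst hw
        by_cases h0 : z = 0
        · subst h0
          have hIval : I ((0:ℂ), (0:ℂ)) = 0 := by simp [hI]
          rw [hF]
          simp only [hIval, mul_zero, add_zero, zero_add]
          field_simp
          rw [mul_div_cancel_left₀ _ (by exact_mod_cast hMpos.ne')]
        · have hIval : I (z, 0) = Gt z := by
            simp only [hI, add_zero, zero_mul]
            rw [dslope_of_ne _ h0, slope_def_field, hGt0]
            field_simp
            ring
          rw [hF]
          simp only [hIval]
          have hd2 : ((M:ℂ))^2 + (starRingEnd ℂ) c * Gt z ≠ 0 := by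
            have := hden2 (z, 0) (TT_sub_Delta (Or.inl ⟨hz, rfl⟩))
            rwa [hIval] at this
          rw [div_eq_iff hd2]
          rw [hGt]
          simp only
          rw [show f (z, 0) = g z from rfl]
          field_simp [hden z hz, show ((M:ℂ))^2 - g z * (starRingEnd ℂ) c ≠ 0 by
            rw [mul_comm]; exact hden z hz]
          ring
      · simp only at hz hw
        subst hz
        by_cases h0 : w = 0
        · subst h0
          have hIval : I ((0:ℂ), (0:ℂ)) = 0 := by simp [hI]
          rw [hF]
          simp only [hIval, mul_zero, add_zero, zero_add]
          field_simp
          rw [mul_div_cancel_left₀ _ (by exact_mod_cast hMpos.ne')]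
        · have hIval : I (0, w) = Ht w := by
            simp only [hI, zero_add, zero_mul]
            rw [dslope_of_ne _ h0, slope_def_field, hHt0]
            field_simp
            ring
          rw [hF]
          simp only [hIval]
          have hd2 : ((M:ℂ))^2 + (starRingEnd ℂ) c * Ht w ≠ 0 := by
            have := hden2 (0, w) (TT_sub_Delta (Or.inr ⟨rfl, hw⟩))
            rwa [hIval] at this
          rw [div_eq_iff hd2]
          rw [hHt]
          simp only
          rw [show f (0, w) = h w from rfl]
          field_simp [hdenh w hw, show ((M:ℂ))^2 - h w * (starRingEnd ℂ) c ≠ 0 by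
            rw [mul_comm]; exact hdenh w hw]
          ring
    exact ⟨F, hFd, hFeq, sup_eq_aux G hTG f F hFM hFeq⟩

theorem stmt_3 (G : Set (ℂ × ℂ)) (hG : IsOpen G) (hbal : Balanced ℂ G) (hTG : TT ⊆ G) :
    NormPres G ↔ G ⊆ Delta := by
  constructor
  · intro hNP
    exact forward_dir G hG hbal hTG hNP
  · intro hGD
    exact backward_dir G hTG hGD
end
end

section
/- Let G ⊆ ℂ² be an open connected set that properly contains Δ = {λ ∈ ℂ² : |λ₁| + |λ₂| < 1}. Then (G,T) is not norm preserving: there is a bounded holomorphic function f on T which admits no holomorphic extension F : G → ℂ with sup_{λ∈G} |F(λ)| = sup_{λ∈T} |f(λ)|. -/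
open Metric

noncomputable section

lemma conj_mul_self {α : ℂ} (h : ‖α‖ = 1) : (starRingEnd ℂ α) * α = 1 := by
  rw [← Complex.normSq_eq_conj_mul_self]; norm_cast
  rw [Complex.normSq_eq_norm_sq, h]; norm_num

lemma zero_mem_Delta : ((0:ℂ), (0:ℂ)) ∈ Delta := by simp [Delta]

lemma isOpen_Delta : IsOpen Delta := isOpen_lt (by continuity) continuous_const


section Key
variable {G : Set (ℂ × ℂ)} {α β : ℂ} {F : ℂ × ℂ → ℂ}

lemma fderiv_vals (hG : IsOpen G) (hsub : Delta ⊆ G)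
    (hF : DifferentiableOn ℂ F G)
    (hT : ∀ p ∈ TT, F p = α * p.1 + β * p.2) :
    fderiv ℂ F (0, 0) (1, 0) = α ∧ fderiv ℂ F (0, 0) (0, 1) = β := by
  have h0G : ((0:ℂ), (0:ℂ)) ∈ G := hsub (by simp [Delta])
  have hFd : DifferentiableAt ℂ F (0, 0) :=
    (hF.differentiableAt (hG.mem_nhds h0G))
  have hD := hFd.hasFDerivAt
  constructor
  · have h1 : HasDerivAt (fun z : ℂ => F (z, 0)) (fderiv ℂ F (0, 0) (1, 0)) 0 := by
      have : HasDerivAt (fun z : ℂ => (z, (0:ℂ))) ((1:ℂ), (0:ℂ)) 0 :=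
        (hasDerivAt_id 0).prodMk (hasDerivAt_const 0 0) |>.congr_deriv (by simp)
      exact hD.comp_hasDerivAt_of_eq 0 this (by simp)
    have h2 : HasDerivAt (fun z : ℂ => F (z, 0)) α 0 := by
      have h3 : HasDerivAt (fun z : ℂ => α * z) α 0 := by
        simpa using (hasDerivAt_id (0:ℂ)).const_mul α
      refine h3.congr_of_eventuallyEq ?_
      filter_upwards [ball_mem_nhds (0:ℂ) one_pos] with z hz
      rw [hT (z, 0) (Or.inl ⟨hz, rfl⟩)]; simp
    exact h1.unique h2
  · have h1 : HasDerivAt (fun z : ℂ => F (0, z)) (fderiv ℂ F (0, 0) (0, 1)) 0 := by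
      have : HasDerivAt (fun z : ℂ => ((0:ℂ), z)) ((0:ℂ), (1:ℂ)) 0 :=
        (hasDerivAt_const 0 0).prodMk (hasDerivAt_id 0) |>.congr_deriv (by simp)
      exact hD.comp_hasDerivAt_of_eq 0 this (by simp)
    have h2 : HasDerivAt (fun z : ℂ => F (0, z)) β 0 := by
      have h3 : HasDerivAt (fun z : ℂ => β * z) β 0 := by
        simpa using (hasDerivAt_id (0:ℂ)).const_mul β
      refine h3.congr_of_eventuallyEq ?_
      filter_upwards [ball_mem_nhds (0:ℂ) one_pos] with z hz
      rw [hT (0, z) (Or.inr ⟨rfl, hz⟩)]; simp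
    exact h1.unique h2


lemma schwarz_step (hG : IsOpen G) (hsub : Delta ⊆ G)
    (hα : ‖α‖ = 1) (hβ : ‖β‖ = 1)
    (hF : DifferentiableOn ℂ F G) (hFb : ∀ q ∈ G, ‖F q‖ ≤ 1)
    (hT : ∀ p ∈ TT, F p = α * p.1 + β * p.2)
    {a b : ℝ} (ha : 0 ≤ a) (hb : 0 ≤ b) (hab : a + b = 1)
    {ζ : ℂ} (hζ : ‖ζ‖ < 1) :
    F ((a : ℂ) * starRingEnd ℂ α * ζ, (b : ℂ) * starRingEnd ℂ β * ζ) = ζ := by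
  set c₁ : ℂ := (a : ℂ) * starRingEnd ℂ α with hc₁
  set c₂ : ℂ := (b : ℂ) * starRingEnd ℂ β with hc₂
  have hnc₁ : ‖c₁‖ = a := by
    simp [hc₁, norm_mul, hα, abs_of_nonneg ha]
  have hnc₂ : ‖c₂‖ = b := by
    simp [hc₂, norm_mul, hβ, abs_of_nonneg hb]
  set ψ : ℂ → ℂ × ℂ := fun z => (c₁ * z, c₂ * z) with hψ
  have hψΔ : ∀ z ∈ ball (0:ℂ) 1, ψ z ∈ Delta := by
    intro z hz
    simp only [mem_ball_zero_iff] at hz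
    simp only [Delta, Set.mem_setOf_eq, hψ, norm_mul, hnc₁, hnc₂]
    calc a * ‖z‖ + b * ‖z‖ = (a + b) * ‖z‖ := by ring
    _ = ‖z‖ := by rw [hab, one_mul]
    _ < 1 := hz
  have hψG : ∀ z ∈ ball (0:ℂ) 1, ψ z ∈ G := fun z hz => hsub (hψΔ z hz)
  set g : ℂ → ℂ := fun z => F (ψ z) with hg
  have hgd : DifferentiableOn ℂ g (ball 0 1) := by
    apply hF.comp
    · intro z _
      exact ((differentiable_id.const_mul c₁).prodMk (differentiable_id.const_mul c₂)).differentiableAt.differentiableWithinAt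
    · exact hψG
  have hg0 : g 0 = 0 := by
    have : ψ 0 = ((0:ℂ), (0:ℂ)) := by simp [hψ]
    rw [hg]; simp only [this]
    rw [hT _ zero_mem_TT]; simp
  -- derivative of g at 0 is 1
  have h0G : ((0:ℂ), (0:ℂ)) ∈ G := hsub (by simp [Delta])
  have hFd : DifferentiableAt ℂ F (0, 0) := hF.differentiableAt (hG.mem_nhds h0G)
  have hψd : HasDerivAt ψ (c₁, c₂) 0 := by
    have h1 : HasDerivAt (fun z : ℂ => c₁ * z) c₁ 0 := by
      simpa using (hasDerivAt_id (0:ℂ)).const_mul c₁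
    have h2 : HasDerivAt (fun z : ℂ => c₂ * z) c₂ 0 := by
      simpa using (hasDerivAt_id (0:ℂ)).const_mul c₂
    exact h1.prodMk h2
  have hgd1 : HasDerivAt g (fderiv ℂ F (0, 0) (c₁, c₂)) 0 := by
    exact hFd.hasFDerivAt.comp_hasDerivAt_of_eq 0 hψd (by simp [hψ])
  obtain ⟨hD1, hD2⟩ := fderiv_vals hG hsub hF hT
  have hval : fderiv ℂ F (0, 0) (c₁, c₂) = 1 := by
    have hdecomp : (c₁, c₂) = c₁ • ((1:ℂ), (0:ℂ)) + c₂ • ((0:ℂ), (1:ℂ)) := by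
      simp [Prod.ext_iff]
    rw [hdecomp, map_add, map_smul, map_smul, hD1, hD2]
    simp only [smul_eq_mul, hc₁, hc₂]
    rw [mul_assoc, mul_assoc, conj_mul_self hα, conj_mul_self hβ]
    norm_cast
    simp [hab]
  have hgd' : HasDerivAt g 1 0 := hval ▸ hgd1
  by_cases hcase : ∀ z ∈ ball (0:ℂ) 1, ‖g z‖ < 1
  · have hmaps : Set.MapsTo g (ball (0:ℂ) 1) (ball (g 0) 1) := by
      intro z hz
      rw [hg0, mem_ball_zero_iff]
      exact hcase z hz
    have heq : ‖dslope g 0 0‖ = 1 / 1 := by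
      rw [dslope_same, hgd'.deriv]; norm_num
    have := Complex.affine_of_mapsTo_ball_of_exists_norm_dslope_eq_div hgd (hmaps.mono_right ball_subset_closedBall)
      (mem_ball_self one_pos) heq (mem_ball_zero_iff.mpr hζ)
    simp only [dslope_same, hgd'.deriv, hg0, sub_zero, smul_eq_mul, mul_one, zero_add] at this
    exact this
  · exfalso
    push_neg at hcase
    obtain ⟨z₀, hz₀, hz₀1⟩ := hcase
    have hle : ∀ z ∈ ball (0:ℂ) 1, ‖g z‖ ≤ 1 := fun z hz => hFb _ (hψG z hz)
    have hz₀eq : ‖g z₀‖ = 1 := le_antisymm (hle z₀ hz₀) hz₀1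
    have hmax : IsMaxOn (norm ∘ g) (ball (0:ℂ) 1) z₀ := by
      refine isMaxOn_iff.mpr fun z hz => ?_
      simp only [Function.comp_apply, hz₀eq]
      exact hle z hz
    have hconst := Complex.eqOn_of_isPreconnected_of_isMaxOn_norm
      (convex_ball (0:ℂ) 1).isPreconnected isOpen_ball hgd hz₀ hmax
    have : deriv g 0 = 0 := by
      have hev : g =ᶠ[nhds (0:ℂ)] fun _ => g z₀ := by
        filter_upwards [isOpen_ball.mem_nhds (mem_ball_self one_pos)] with z hz
        exact hconst hz
      rw [hev.deriv_eq]; simp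
    rw [hgd'.deriv] at this
    exact one_ne_zero this


lemma eq_on_Delta_main (hG : IsOpen G) (hsub : Delta ⊆ G)
    (hα : ‖α‖ = 1) (hβ : ‖β‖ = 1)
    (hF : DifferentiableOn ℂ F G) (hFb : ∀ q ∈ G, ‖F q‖ ≤ 1)
    (hT : ∀ p ∈ TT, F p = α * p.1 + β * p.2)
    {z w : ℂ} (hzw : ‖z‖ + ‖w‖ < 1) (hne : α * z + β * w ≠ 0) :
    F (z, w) = α * z + β * w := by
  set ζ : ℂ := α * z + β * w with hζdef
  have hζnorm : ‖ζ‖ < 1 := by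
    calc ‖ζ‖ ≤ ‖α * z‖ + ‖β * w‖ := norm_add_le _ _
    _ = ‖z‖ + ‖w‖ := by simp [norm_mul, hα, hβ]
    _ < 1 := hzw
  set Ω : Set ℂ := {s : ℂ | (‖s‖ + ‖1 - s‖) * ‖ζ‖ < 1} with hΩdef
  have hΩopen : IsOpen Ω := isOpen_lt (by continuity) continuous_const
  have hΩconv : Convex ℝ Ω := by
    intro x hx y hy a b ha hb hab
    simp only [hΩdef, Set.mem_setOf_eq] at hx hy ⊢
    set m : ℝ := max ((‖x‖ + ‖1 - x‖) * ‖ζ‖) ((‖y‖ + ‖1 - y‖) * ‖ζ‖) with hm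
    have hζ0 : (0:ℝ) ≤ ‖ζ‖ := norm_nonneg _
    have key : (‖a • x + b • y‖ + ‖1 - (a • x + b • y)‖) * ‖ζ‖ ≤ m := by
      have h1 : ‖a • x + b • y‖ ≤ a * ‖x‖ + b * ‖y‖ := by
        calc ‖a • x + b • y‖ ≤ ‖a • x‖ + ‖b • y‖ := norm_add_le _ _
        _ = a * ‖x‖ + b * ‖y‖ := by
          rw [norm_smul, norm_smul]
          simp [abs_of_nonneg ha, abs_of_nonneg hb, Real.norm_eq_abs]
      have h2 : ‖1 - (a • x + b • y)‖ ≤ a * ‖1 - x‖ + b * ‖1 - y‖ := by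
        have : (1 : ℂ) - (a • x + b • y) = a • ((1:ℂ) - x) + b • ((1:ℂ) - y) := by
          have hab' : (a : ℂ) + (b : ℂ) = 1 := by
            exact_mod_cast hab
          simp only [smul_sub]
          rw [Complex.real_smul, Complex.real_smul, Complex.real_smul, Complex.real_smul]
          rw [mul_one, mul_one]
          rw [← hab']
          ring
        rw [this]
        calc ‖a • ((1:ℂ) - x) + b • ((1:ℂ) - y)‖ ≤ ‖a • ((1:ℂ) - x)‖ + ‖b • ((1:ℂ) - y)‖ :=
              norm_add_le _ _
        _ = a * ‖1 - x‖ + b * ‖1 - y‖ := by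
          rw [norm_smul, norm_smul]
          simp [abs_of_nonneg ha, abs_of_nonneg hb, Real.norm_eq_abs]
      calc (‖a • x + b • y‖ + ‖1 - (a • x + b • y)‖) * ‖ζ‖
          ≤ ((a * ‖x‖ + b * ‖y‖) + (a * ‖1 - x‖ + b * ‖1 - y‖)) * ‖ζ‖ := by
            apply mul_le_mul_of_nonneg_right (add_le_add h1 h2) hζ0
      _ = a * ((‖x‖ + ‖1 - x‖) * ‖ζ‖) + b * ((‖y‖ + ‖1 - y‖) * ‖ζ‖) := by ring
      _ ≤ a * m + b * m := by
        apply add_le_add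
        · exact mul_le_mul_of_nonneg_left (le_max_left _ _) ha
        · exact mul_le_mul_of_nonneg_left (le_max_right _ _) hb
      _ = m := by rw [← add_mul, hab, one_mul]
    exact lt_of_le_of_lt key (max_lt hx hy)
  set H : ℂ → ℂ := fun s => F (s * starRingEnd ℂ α * ζ, (1 - s) * starRingEnd ℂ β * ζ) with hH
  have hθmaps : ∀ s ∈ Ω, (s * starRingEnd ℂ α * ζ, (1 - s) * starRingEnd ℂ β * ζ) ∈ Delta := by
    intro s hs
    simp only [hΩdef, Set.mem_setOf_eq] at hs
    simp only [Delta, Set.mem_setOf_eq, norm_mul]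
    have hcα : ‖starRingEnd ℂ α‖ = 1 := by simp [hα]
    have hcβ : ‖starRingEnd ℂ β‖ = 1 := by simp [hβ]
    rw [hcα, hcβ]
    calc ‖s‖ * 1 * ‖ζ‖ + ‖1 - s‖ * 1 * ‖ζ‖ = (‖s‖ + ‖1 - s‖) * ‖ζ‖ := by ring
    _ < 1 := hs
  have hHd : DifferentiableOn ℂ H Ω := by
    apply hF.comp
    · intro s _
      apply DifferentiableAt.differentiableWithinAt
      apply DifferentiableAt.prodMk
      · exact (differentiableAt_id.mul_const _).mul_const _
      · exact ((differentiableAt_const _).sub differentiableAt_id |>.mul_const _).mul_const _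
    · exact fun s hs => hsub (hθmaps s hs)
  have hHa : AnalyticOnNhd ℂ H Ω := hHd.analyticOnNhd hΩopen
  have hconsta : AnalyticOnNhd ℂ (fun _ : ℂ => ζ) Ω := analyticOnNhd_const
  have hhalf : (1/2 : ℂ) ∈ Ω := by
    simp only [hΩdef, Set.mem_setOf_eq]
    have : ‖(1:ℂ) - 1/2‖ = 1/2 := by norm_num
    have h12 : ‖(1/2 : ℂ)‖ = 1/2 := by norm_num
    rw [this, h12]
    norm_num
    exact hζnorm
  -- frequently equal near 1/2
  have hreal : ∀ a : ℝ, 0 ≤ a → a ≤ 1 → H a = ζ := by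
    intro a ha0 ha1
    have := schwarz_step hG hsub hα hβ hF hFb hT ha0 (by linarith : (0:ℝ) ≤ 1 - a)
      (by ring) hζnorm
    simpa [hH, push_cast] using this
  have hu : Filter.Tendsto (fun n : ℕ => ((1/2 + ((n:ℝ)+3)⁻¹ : ℝ) : ℂ)) Filter.atTop
      (nhdsWithin (1/2 : ℂ) {(1/2 : ℂ)}ᶜ) := by
    apply tendsto_nhdsWithin_of_tendsto_nhds_of_eventually_within
    · have h1 : Filter.Tendsto (fun n : ℕ => (1/2 + ((n:ℝ)+3)⁻¹ : ℝ)) Filter.atTop (nhds (1/2 : ℝ)) := by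
        have h2 : Filter.Tendsto (fun n : ℕ => ((n:ℝ)+3)⁻¹) Filter.atTop (nhds 0) := by
          apply Filter.Tendsto.inv_tendsto_atTop
          exact Filter.tendsto_atTop_add_const_right _ 3 tendsto_natCast_atTop_atTop
        simpa using (tendsto_const_nhds (x := (1/2:ℝ))).add h2
      have := (Complex.continuous_ofReal.tendsto (1/2 : ℝ)).comp h1
      have h6 : ((1/2:ℝ):ℂ) = (1/2:ℂ) := by norm_num
      rw [h6] at this
      exact this.congr fun n => rfl
    · filter_upwards with n
      simp only [Set.mem_compl_iff, Set.mem_singleton_iff]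
      intro h
      have h3 : ((n:ℝ)+3)⁻¹ > 0 := by positivity
      rw [show ((1:ℂ)/2) = ((1/2 : ℝ) : ℂ) by norm_num] at h
      have h4 := Complex.ofReal_inj.mp h
      linarith
  have hfreq : ∃ᶠ s in nhdsWithin (1/2 : ℂ) {(1/2 : ℂ)}ᶜ, H s = ζ := by
    apply hu.frequently
    apply Filter.Frequently.of_forall
    intro n
    apply hreal
    · positivity
    · have h5 : (3:ℝ) ≤ (n:ℝ)+3 := by
        have := Nat.cast_nonneg (α := ℝ) n
        linarith
      have h3 : ((n:ℝ)+3)⁻¹ ≤ 3⁻¹ := by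
        apply inv_anti₀ (by norm_num) h5
      have : (3:ℝ)⁻¹ ≤ 1/2 := by norm_num
      linarith
  have hEq := hHa.eqOn_of_preconnected_of_frequently_eq hconsta hΩconv.isPreconnected hhalf hfreq
  -- evaluate at a₀ = α z / ζ
  set a₀ : ℂ := α * z / ζ with ha₀
  have h1a₀ : 1 - a₀ = β * w / ζ := by
    rw [eq_div_iff hne, ha₀, sub_mul, div_mul_cancel₀ _ hne, hζdef]; ring
  have ha₀Ω : a₀ ∈ Ω := by
    simp only [hΩdef, Set.mem_setOf_eq]
    have hz' : ‖a₀‖ * ‖ζ‖ = ‖z‖ := by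
      rw [ha₀, norm_div, norm_mul, hα, one_mul, div_mul_cancel₀]
      exact norm_ne_zero_iff.mpr hne
    have hw' : ‖1 - a₀‖ * ‖ζ‖ = ‖w‖ := by
      rw [h1a₀, norm_div, norm_mul, hβ, one_mul, div_mul_cancel₀]
      exact norm_ne_zero_iff.mpr hne
    calc (‖a₀‖ + ‖1 - a₀‖) * ‖ζ‖ = ‖a₀‖ * ‖ζ‖ + ‖1 - a₀‖ * ‖ζ‖ := by ring
    _ = ‖z‖ + ‖w‖ := by rw [hz', hw']
    _ < 1 := hzw
  have hval := hEq ha₀Ω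
  simp only [hH] at hval
  have harg1 : a₀ * starRingEnd ℂ α * ζ = z := by
    rw [ha₀]
    field_simp
    calc α * z * starRingEnd ℂ α = (starRingEnd ℂ α * α) * z := by ring
    _ = z := by rw [conj_mul_self hα, one_mul]
  have harg2 : (1 - a₀) * starRingEnd ℂ β * ζ = w := by
    rw [h1a₀]
    field_simp
    calc β * w * starRingEnd ℂ β = (starRingEnd ℂ β * β) * w := by ring
    _ = w := by rw [conj_mul_self hβ, one_mul]
  rw [harg1, harg2] at hval
  exact hval


lemma eq_on_Delta (hG : IsOpen G) (hsub : Delta ⊆ G)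
    (hα : ‖α‖ = 1) (hβ : ‖β‖ = 1)
    (hF : DifferentiableOn ℂ F G) (hFb : ∀ q ∈ G, ‖F q‖ ≤ 1)
    (hT : ∀ p ∈ TT, F p = α * p.1 + β * p.2) :
    ∀ p ∈ Delta, F p = α * p.1 + β * p.2 := by
  rintro ⟨z, w⟩ hp
  simp only [Delta, Set.mem_setOf_eq] at hp
  by_cases hne : α * z + β * w ≠ 0
  · exact eq_on_Delta_main hG hsub hα hβ hF hFb hT hp hne
  push_neg at hne
  by_cases hz : z = 0
  · have hβ0 : β ≠ 0 := by
      intro h; rw [h] at hβ; simp at hβ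
    have hw : w = 0 := by
      have h2 : β * w = 0 := by rw [hz] at hne; simpa using hne
      exact (mul_eq_zero.mp h2).resolve_left hβ0
    rw [hz, hw, hT _ zero_mem_TT]
  · -- z ≠ 0, α z + β w = 0 : continuity argument in the second variable
    set s₀ : ℂ := β * w with hs₀
    have hconjs₀ : starRingEnd ℂ β * s₀ = w := by
      rw [hs₀, ← mul_assoc, conj_mul_self hβ, one_mul]
    have hnw : ‖s₀‖ = ‖w‖ := by simp [hs₀, norm_mul, hβ]
    set φ : ℂ → ℂ := fun s => F (z, starRingEnd ℂ β * s) with hφ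
    have hzwΔ : ((z, w) : ℂ × ℂ) ∈ Delta := hp
    have hcont : ContinuousAt φ s₀ := by
      have h1 : ContinuousAt F (z, w) :=
        (hF.differentiableAt (hG.mem_nhds (hsub hzwΔ))).continuousAt
      have h2 : ContinuousAt (fun s : ℂ => ((z, starRingEnd ℂ β * s) : ℂ × ℂ)) s₀ :=
        (continuous_const.prodMk (continuous_const.mul continuous_id)).continuousAt
      have h1' : ContinuousAt F ((fun s : ℂ => ((z, starRingEnd ℂ β * s) : ℂ × ℂ)) s₀) := by
        simpa [hconjs₀] using h1
      exact ContinuousAt.comp h1' h2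
    have h1' : Filter.Tendsto φ (nhdsWithin s₀ {s₀}ᶜ) (nhds (φ s₀)) :=
      hcont.continuousWithinAt.tendsto
    have h2' : Filter.Tendsto φ (nhdsWithin s₀ {s₀}ᶜ) (nhds (α * z + s₀)) := by
      have hev : ∀ᶠ s in nhdsWithin s₀ {s₀}ᶜ, φ s = α * z + s := by
        have hVopen : IsOpen {s : ℂ | ‖z‖ + ‖s‖ < 1} := isOpen_lt (by continuity) continuous_const
        have hV : {s : ℂ | ‖z‖ + ‖s‖ < 1} ∈ nhds s₀ := by
          apply hVopen.mem_nhds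
          simp only [Set.mem_setOf_eq, hnw]
          exact hp
        filter_upwards [mem_nhdsWithin_of_mem_nhds hV, self_mem_nhdsWithin] with s hs hs'
        simp only [Set.mem_compl_iff, Set.mem_singleton_iff] at hs'
        have harg : ‖z‖ + ‖starRingEnd ℂ β * s‖ < 1 := by
          simpa [norm_mul, hβ] using hs
        have hne2 : α * z + β * (starRingEnd ℂ β * s) ≠ 0 := by
          rw [← mul_assoc, mul_comm β, conj_mul_self hβ, one_mul]
          have hαz : α * z = -s₀ := by
            have h4 : α * z + s₀ = 0 := by rw [hs₀]; exact hne
            linear_combination h4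
          rw [hαz]
          intro h
          apply hs'
          linear_combination h
        have h5 := eq_on_Delta_main hG hsub hα hβ hF hFb hT harg hne2
        rw [hφ]
        simp only []
        rw [h5, ← mul_assoc, mul_comm β, conj_mul_self hβ, one_mul]
      refine Filter.Tendsto.congr' (Filter.EventuallyEq.symm hev) ?_
      exact ((continuous_const.add continuous_id).tendsto s₀).mono_left nhdsWithin_le_nhds
    have huniq := tendsto_nhds_unique h1' h2'
    have hφs₀ : φ s₀ = F (z, w) := by rw [hφ]; simp [hconjs₀]
    rw [hφs₀] at huniq
    rw [huniq, hs₀]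

/-- Connectedness forces `G` to contain a point on the boundary sphere of `Δ`. -/
lemma exists_boundary (hconn : IsPreconnected G) (hsub : Delta ⊆ G)
    {p : ℂ × ℂ} (hpG : p ∈ G) (hpΔ : p ∉ Delta) :
    ∃ q ∈ G, ‖q.1‖ + ‖q.2‖ = 1 := by
  by_contra h
  push_neg at h
  set u : Set (ℂ × ℂ) := {x | ‖x.1‖ + ‖x.2‖ < 1} with hu
  set v : Set (ℂ × ℂ) := {x | 1 < ‖x.1‖ + ‖x.2‖} with hv
  have huo : IsOpen u := isOpen_lt (by continuity) continuous_const
  have hvo : IsOpen v := isOpen_lt continuous_const (by continuity)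
  have hGuv : G ⊆ u ∪ v := by
    intro x hx
    rcases lt_trichotomy (‖x.1‖ + ‖x.2‖) 1 with h1 | h1 | h1
    · exact Or.inl h1
    · exact absurd h1 (h x hx)
    · exact Or.inr h1
  have hGu : (G ∩ u).Nonempty := ⟨(0, 0), hsub zero_mem_Delta, by simp [hu]⟩
  have hGv : (G ∩ v).Nonempty := by
    refine ⟨p, hpG, ?_⟩
    have h1 : ¬(‖p.1‖ + ‖p.2‖ < 1) := hpΔ
    have h2 : ‖p.1‖ + ‖p.2‖ ≠ 1 := h p hpG
    simp only [hv, Set.mem_setOf_eq]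
    rcases lt_or_eq_of_le (not_lt.mp h1) with h3 | h3
    · exact h3
    · exact absurd h3.symm h2
  obtain ⟨x, _, hxu, hxv⟩ := hconn u v huo hvo hGuv hGu hGv
  have hxu' : ‖x.1‖ + ‖x.2‖ < 1 := hxu
  have hxv' : 1 < ‖x.1‖ + ‖x.2‖ := hxv
  linarith

/-- The value of `F` at a boundary point of `Δ` lying in `G`, by continuity. -/
lemma value_at_boundary (hG : IsOpen G) (hsub : Delta ⊆ G)
    (hα : ‖α‖ = 1) (hβ : ‖β‖ = 1)
    (hF : DifferentiableOn ℂ F G) (hFb : ∀ q ∈ G, ‖F q‖ ≤ 1)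
    (hT : ∀ p ∈ TT, F p = α * p.1 + β * p.2)
    {q : ℂ × ℂ} (hqG : q ∈ G) (hq1 : ‖q.1‖ + ‖q.2‖ = 1) :
    F q = α * q.1 + β * q.2 := by
  have hq_cl : q ∈ closure Delta := by
    have hseq : Filter.Tendsto (fun n : ℕ => ((1 - ((n:ℝ)+2)⁻¹ : ℝ) • q)) Filter.atTop (nhds q) := by
      have h1 : Filter.Tendsto (fun n : ℕ => (1 - ((n:ℝ)+2)⁻¹ : ℝ)) Filter.atTop (nhds 1) := by
        have h2 : Filter.Tendsto (fun n : ℕ => ((n:ℝ)+2)⁻¹) Filter.atTop (nhds 0) := by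
          apply Filter.Tendsto.inv_tendsto_atTop
          exact Filter.tendsto_atTop_add_const_right _ 2 tendsto_natCast_atTop_atTop
        simpa using (tendsto_const_nhds (x := (1:ℝ))).sub h2
      simpa using h1.smul_const q
    apply mem_closure_of_tendsto hseq
    filter_upwards with n
    have hn2 : (0:ℝ) < (n:ℝ) + 2 := by positivity
    have ht0 : 0 ≤ (1 - ((n:ℝ)+2)⁻¹ : ℝ) := by
      have : ((n:ℝ)+2)⁻¹ ≤ 1 := by
        rw [inv_le_one_iff₀]
        right; linarith
      linarith
    have ht1 : (1 - ((n:ℝ)+2)⁻¹ : ℝ) < 1 := by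
      have : (0:ℝ) < ((n:ℝ)+2)⁻¹ := by positivity
      linarith
    show ‖((1 - ((n:ℝ)+2)⁻¹ : ℝ) • q).1‖ + ‖((1 - ((n:ℝ)+2)⁻¹ : ℝ) • q).2‖ < 1
    rw [Prod.smul_fst, Prod.smul_snd, norm_smul, norm_smul, Real.norm_eq_abs,
      abs_of_nonneg ht0, ← mul_add, hq1, mul_one]
    exact ht1
  have hnb : (nhdsWithin q Delta).NeBot := mem_closure_iff_nhdsWithin_neBot.mp hq_cl
  have h1 : Filter.Tendsto F (nhdsWithin q Delta) (nhds (F q)) :=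
    ((hF.differentiableAt (hG.mem_nhds hqG)).continuousAt).continuousWithinAt.tendsto
  have h2 : Filter.Tendsto F (nhdsWithin q Delta) (nhds (α * q.1 + β * q.2)) := by
    have hev : ∀ᶠ x in nhdsWithin q Delta, F x = α * x.1 + β * x.2 :=
      eventually_nhdsWithin_of_forall (eq_on_Delta hG hsub hα hβ hF hFb hT)
    refine Filter.Tendsto.congr' (Filter.EventuallyEq.symm hev) ?_
    exact (Continuous.tendsto (by continuity) q).mono_left nhdsWithin_le_nhds
  exact tendsto_nhds_unique h1 h2


end Key

lemma supOn_linear_TT {α β : ℂ} (hα : ‖α‖ = 1) (hβ : ‖β‖ = 1) :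
    supOn (fun p : ℂ × ℂ => α * p.1 + β * p.2) TT = 1 := by
  set S : Set ℝ := (fun p : ℂ × ℂ => ‖α * p.1 + β * p.2‖) '' TT with hS
  have hbdd : ∀ x ∈ S, x ≤ 1 := by
    rintro x ⟨p, hp, rfl⟩
    show ‖α * p.1 + β * p.2‖ ≤ 1
    rcases hp with ⟨h1, h2⟩ | ⟨h1, h2⟩
    · rw [h2]
      simp only [mul_zero, add_zero, norm_mul, hα, one_mul]
      exact le_of_lt (mem_ball_zero_iff.mp h1)
    · rw [h1]
      simp only [mul_zero, zero_add, norm_mul, hβ, one_mul]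
      exact le_of_lt (mem_ball_zero_iff.mp h2)
  have hS0 : (0:ℝ) ∈ S := ⟨(0, 0), zero_mem_TT, by simp⟩
  have hBdd : BddAbove S := ⟨1, fun x hx => hbdd x hx⟩
  refine le_antisymm (Real.sSup_le hbdd zero_le_one) ?_
  refine le_of_forall_lt fun c hc => ?_
  rcases lt_or_ge c 0 with h | h
  · exact lt_of_lt_of_le h (le_csSup hBdd hS0)
  · set t : ℝ := (c + 1) / 2 with ht
    have ht0 : 0 ≤ t := by rw [ht]; linarith
    have ht1 : t < 1 := by rw [ht]; linarith
    have htc : c < t := by rw [ht]; linarith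
    have hmem : t ∈ S := by
      refine ⟨((t : ℂ) * starRingEnd ℂ α, 0), Or.inl ⟨?_, rfl⟩, ?_⟩
      · rw [uD, mem_ball_zero_iff]
        rw [norm_mul, RCLike.norm_conj, hα, mul_one, Complex.norm_real, Real.norm_eq_abs,
          abs_of_nonneg ht0]
        exact ht1
      · show ‖α * ((t : ℂ) * starRingEnd ℂ α) + β * 0‖ = t
        have key : α * ((t : ℂ) * starRingEnd ℂ α) + β * 0 = (t : ℂ) := by
          rw [mul_zero, add_zero]
          calc α * ((t : ℂ) * starRingEnd ℂ α) = (starRingEnd ℂ α * α) * (t : ℂ) := by ring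
          _ = (t : ℂ) := by rw [conj_mul_self hα, one_mul]
        rw [key, Complex.norm_real, Real.norm_eq_abs, abs_of_nonneg ht0]
    exact lt_of_lt_of_le htc (le_csSup hBdd hmem)

theorem stmt_4 (G : Set (ℂ × ℂ)) (hG : IsOpen G) (hconn : IsConnected G)
    (hsub : Delta ⊆ G) (hne : Delta ≠ G) :
    ∃ f : ℂ × ℂ → ℂ, HoloOnT f ∧ BddOnT f ∧
      ¬ ∃ F : ℂ × ℂ → ℂ, DifferentiableOn ℂ F G ∧ (∀ p ∈ TT, F p = f p) ∧
        supOn F G = supOn f TT := by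
  obtain ⟨p, hpG, hpΔ⟩ : ∃ p, p ∈ G ∧ p ∉ Delta := by
    rcases Set.exists_of_ssubset (ssubset_of_subset_of_ne hsub hne) with ⟨p, h1, h2⟩
    exact ⟨p, h1, h2⟩
  obtain ⟨q, hqG, hq1⟩ := exists_boundary hconn.isPreconnected hsub hpG hpΔ
  set α : ℂ := if q.1 = 0 then 1 else (‖q.1‖ : ℂ) / q.1 with hαdef
  set β : ℂ := if q.2 = 0 then 1 else (‖q.2‖ : ℂ) / q.2 with hβdef
  have hα : ‖α‖ = 1 := by
    rw [hαdef]; split_ifs with h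
    · simp
    · rw [norm_div]
      simp only [Complex.norm_real, Real.norm_eq_abs, abs_norm]
      exact div_self (norm_ne_zero_iff.mpr h)
  have hβ : ‖β‖ = 1 := by
    rw [hβdef]; split_ifs with h
    · simp
    · rw [norm_div]
      simp only [Complex.norm_real, Real.norm_eq_abs, abs_norm]
      exact div_self (norm_ne_zero_iff.mpr h)
  have hαq : α * q.1 = (‖q.1‖ : ℂ) := by
    rw [hαdef]; split_ifs with h
    · simp [h]
    · field_simp
  have hβq : β * q.2 = (‖q.2‖ : ℂ) := by
    rw [hβdef]; split_ifs with h
    · simp [h]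
    · field_simp
  refine ⟨fun x => α * x.1 + β * x.2, ?_, ?_, ?_⟩
  · intro x _
    exact ⟨Set.univ, isOpen_univ, trivial, fun x => α * x.1 + β * x.2,
      ((differentiable_fst.const_mul α).add (differentiable_snd.const_mul β)).differentiableOn,
      fun _ _ => rfl⟩
  · refine ⟨1, ?_⟩
    rintro x (⟨h1, h2⟩ | ⟨h1, h2⟩)
    · show ‖α * x.1 + β * x.2‖ ≤ 1
      rw [h2]
      simp only [mul_zero, add_zero, norm_mul, hα, one_mul]
      exact le_of_lt (mem_ball_zero_iff.mp h1)
    · show ‖α * x.1 + β * x.2‖ ≤ 1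
      rw [h1]
      simp only [mul_zero, zero_add, norm_mul, hβ, one_mul]
      exact le_of_lt (mem_ball_zero_iff.mp h2)
  · rintro ⟨F, hFd, hFT, hsup⟩
    rw [supOn_linear_TT hα hβ] at hsup
    have hFb : ∀ x ∈ G, ‖F x‖ ≤ 1 := by
      intro x hx
      by_cases hbdd : BddAbove ((fun x => ‖F x‖) '' G)
      · have h2 := le_csSup hbdd (Set.mem_image_of_mem _ hx)
        rw [supOn] at hsup
        rw [hsup] at h2
        exact h2
      · exfalso
        have h0 := Real.sSup_of_not_bddAbove hbdd
        rw [supOn, h0] at hsup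
        norm_num at hsup
    have hFq := value_at_boundary hG hsub hα hβ hFd hFb hFT hqG hq1
    have hnFq : ‖F q‖ = 1 := by
      rw [hFq, hαq, hβq, ← Complex.ofReal_add, Complex.norm_real, Real.norm_eq_abs,
        abs_of_nonneg (by positivity), hq1]
    have hmax : IsMaxOn (norm ∘ F) G q := by
      refine isMaxOn_iff.mpr fun x hx => ?_
      simp only [Function.comp_apply, hnFq]
      exact hFb x hx
    have hconst := Complex.eqOn_of_isPreconnected_of_isMaxOn_norm
      hconn.isPreconnected hG hFd hqG hmax
    have h00 : F (0, 0) = 0 := by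
      rw [hFT _ zero_mem_TT]; simp
    have h2 := hconst (hsub zero_mem_Delta)
    rw [h00, Function.const_apply] at h2
    rw [← h2] at hnFq
    simp at hnFq
end
end

section
/- There is no ℂ-linear map E from the vector space of bounded holomorphic functions on T to the vector space of bounded holomorphic functions on Δ such that for every bounded holomorphic f on T one has (Ef)(λ) = f(λ) for all λ ∈ T and sup_{λ∈Δ} |Ef(λ)| = sup_{λ∈T} |f(λ)|. -/
open Metric

noncomputable section

noncomputable def bl (α : ℝ) (s : ℂ) : ℂ := (s - (α : ℂ)) / (1 - (α : ℂ) * s)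

lemma mem_TT_left {z : ℂ} (hz : ‖z‖ < 1) : ((z, 0) : ℂ × ℂ) ∈ TT := by
  left; exact ⟨by simpa [uD] using mem_ball_zero_iff.2 hz, rfl⟩

lemma mem_TT_right {w : ℂ} (hw : ‖w‖ < 1) : ((0, w) : ℂ × ℂ) ∈ TT := by
  right; exact ⟨rfl, by simpa [uD] using mem_ball_zero_iff.2 hw⟩

lemma key_ineq (α : ℝ) (hα : |α| ≤ 1/2) {x : ℂ} (hx : ‖x‖ ≤ 1) :
    ‖x + (α : ℂ)‖ ≤ ‖1 + (α : ℂ) * x‖ := by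
  have hα2 : α ^ 2 ≤ 1 := by nlinarith [abs_nonneg α, sq_abs α]
  have hx2 : x.re ^ 2 + x.im ^ 2 ≤ 1 := by
    have := Complex.sq_norm x
    have h1 : ‖x‖ ≤ 1 := hx
    have h0 : (0:ℝ) ≤ ‖x‖ := norm_nonneg x
    nlinarith [Complex.normSq_apply x]
  have hsq : ‖x + (α : ℂ)‖ ^ 2 ≤ ‖1 + (α : ℂ) * x‖ ^ 2 := by
    rw [Complex.sq_norm, Complex.sq_norm]
    simp [Complex.normSq_apply, Complex.add_re, Complex.add_im, Complex.mul_re, Complex.mul_im]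
    nlinarith [sq_abs α, hx2]
  have h1 := norm_nonneg (x + (α : ℂ))
  have h2 := norm_nonneg (1 + (α : ℂ) * x)
  nlinarith

lemma one_add_ne (α : ℝ) (hα : |α| ≤ 1/2) {x : ℂ} (hx : ‖x‖ ≤ 1) :
    (1 : ℂ) + (α : ℂ) * x ≠ 0 := by
  intro h
  have : ‖(α : ℂ) * x‖ = 1 := by
    have : (α : ℂ) * x = -1 := by linear_combination h
    rw [this]; simp
  rw [norm_mul, Complex.norm_real, Real.norm_eq_abs] at this
  nlinarith [norm_nonneg x, abs_nonneg α]

lemma one_sub_ne (α : ℝ) (hα : |α| ≤ 1/2) {s : ℂ} (hs : ‖s‖ ≤ 1) :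
    (1 : ℂ) - (α : ℂ) * s ≠ 0 := by
  have := one_add_ne α hα (x := -s) (by simpa using hs)
  simpa [sub_eq_add_neg, mul_neg] using this

lemma norm_bl_le (α : ℝ) (hα : |α| ≤ 1/2) {s : ℂ} (hs : ‖s‖ ≤ 1) : ‖bl α s‖ ≤ 1 := by
  rw [bl, norm_div]
  have hnum : ‖s - (α : ℂ)‖ ≤ ‖1 - (α : ℂ) * s‖ := by
    have := key_ineq α hα (x := -s) (by simpa using hs)
    calc ‖s - (α : ℂ)‖ = ‖-s + (α : ℂ)‖ := by rw [← norm_neg]; ring_nf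
      _ ≤ ‖1 + (α : ℂ) * (-s)‖ := this
      _ = ‖1 - (α : ℂ) * s‖ := by ring_nf
  have hden : (0:ℝ) < ‖1 - (α : ℂ) * s‖ :=
    norm_pos_iff.2 (one_sub_ne α hα hs)
  rw [div_le_one hden]; exact hnum

lemma hasDerivAt_bl0 (α : ℝ) (hα : |α| ≤ 1/2) :
    HasDerivAt (bl α) (1 - (α : ℂ) ^ 2) 0 := by
  have hne : (1 : ℂ) - (α : ℂ) * 0 ≠ 0 := by simpa using one_sub_ne α hα (s := 0) (by simp)
  have h1 : HasDerivAt (fun s : ℂ => s - (α : ℂ)) 1 0 := (hasDerivAt_id 0).sub_const _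
  have h2 : HasDerivAt (fun s : ℂ => 1 - (α : ℂ) * s) (-(α:ℂ)) 0 := by
    simpa using ((hasDerivAt_id 0).const_mul (α:ℂ)).const_sub 1
  have := h1.div h2 hne
  refine this.congr_deriv (Eq.symm ?_)
  ring

lemma uniq (α : ℝ) (hα : |α| ≤ 1/2) (c : ℂ) (hc : c * c = 1)
    {F : ℂ × ℂ → ℂ} (hF : DifferentiableOn ℂ F Delta)
    (hFb : ∀ p ∈ Delta, ‖F p‖ ≤ 1)
    (hFT : ∀ p ∈ TT, F p = bl α (p.1 + c * p.2)) :
    ∀ p ∈ Delta, F p = bl α (p.1 + c * p.2) := by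
  have hc0 : c ≠ 0 := by
    intro h; rw [h] at hc; simp at hc
  have hc1 : ‖c‖ = 1 := by
    have h : ‖c‖ * ‖c‖ = 1 := by rw [← norm_mul, hc]; simp
    nlinarith [norm_nonneg c]
  have hα2ne : (1 : ℂ) - (α : ℂ) ^ 2 ≠ 0 := by
    have h : ((1 - α ^ 2 : ℝ) : ℂ) = 1 - (α : ℂ) ^ 2 := by push_cast; ring
    rw [← h]
    refine Complex.ofReal_ne_zero.2 ?_
    nlinarith [sq_abs α, abs_nonneg α, mul_self_le_mul_self (abs_nonneg α) hα]
  have h00D : ((0 : ℂ), (0 : ℂ)) ∈ Delta := by simp [Delta]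
  have hDF : HasFDerivAt F (fderiv ℂ F (0, 0)) ((0 : ℂ), (0 : ℂ)) :=
    (hF.differentiableAt (isOpen_Delta.mem_nhds h00D)).hasFDerivAt
  -- partial derivatives at the origin
  have hD1 : fderiv ℂ F (0, 0) (1, 0) = 1 - (α : ℂ) ^ 2 := by
    have hg : HasDerivAt (fun z : ℂ => ((z, (0 : ℂ)) : ℂ × ℂ)) ((1 : ℂ), (0 : ℂ)) 0 :=
      (hasDerivAt_id 0).prodMk (hasDerivAt_const 0 0)
    have hcomp : HasDerivAt (fun z : ℂ => F (z, 0)) (fderiv ℂ F (0, 0) (1, 0)) 0 :=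
      hDF.comp_hasDerivAt_of_eq 0 hg rfl
    have heq : (fun z : ℂ => bl α z) =ᶠ[nhds (0 : ℂ)] fun z => F (z, 0) := by
      filter_upwards [ball_mem_nhds (0 : ℂ) one_pos] with z hz
      rw [hFT (z, 0) (mem_TT_left (mem_ball_zero_iff.1 hz))]; simp
    exact (hcomp.congr_of_eventuallyEq heq).unique (hasDerivAt_bl0 α hα)
  have hD2 : fderiv ℂ F (0, 0) (0, 1) = (1 - (α : ℂ) ^ 2) * c := by
    have hg : HasDerivAt (fun w : ℂ => (((0 : ℂ), w) : ℂ × ℂ)) ((0 : ℂ), (1 : ℂ)) 0 :=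
      (hasDerivAt_const 0 0).prodMk (hasDerivAt_id 0)
    have hcomp : HasDerivAt (fun w : ℂ => F (0, w)) (fderiv ℂ F (0, 0) (0, 1)) 0 :=
      hDF.comp_hasDerivAt_of_eq 0 hg rfl
    have hblc : HasDerivAt (fun w : ℂ => bl α (c * w)) ((1 - (α : ℂ) ^ 2) * c) 0 := by
      have h1 : HasDerivAt (fun w : ℂ => c * w) c 0 := by
        simpa using (hasDerivAt_id (0 : ℂ)).const_mul c
      have h2 : HasDerivAt (bl α) (1 - (α : ℂ) ^ 2) (c * 0) := by
        simpa using hasDerivAt_bl0 α hα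
      exact h2.comp 0 h1
    have heq : (fun w : ℂ => bl α (c * w)) =ᶠ[nhds (0 : ℂ)] fun w => F (0, w) := by
      filter_upwards [ball_mem_nhds (0 : ℂ) one_pos] with w hw
      rw [hFT (0, w) (mem_TT_right (mem_ball_zero_iff.1 hw))]; simp
    exact (hcomp.congr_of_eventuallyEq heq).unique hblc
  -- the ray lemma
  have hray : ∀ a : ℝ, 0 < a → a < 1 → ∀ t : ℂ, ‖t‖ < 1 →
      F (t * (a : ℂ), t * (c * ((1 - a : ℝ) : ℂ))) = bl α t := by
    intro a ha ha1 t htball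
    set b : ℝ := 1 - a with hbdef
    have hb : 0 < b := by rw [hbdef]; linarith
    set ℓ : ℂ → ℂ × ℂ := fun t => (t * (a : ℂ), t * (c * (b : ℂ))) with hℓ
    have hmaps : Set.MapsTo ℓ (ball (0 : ℂ) 1) Delta := by
      intro t ht
      rw [mem_ball_zero_iff] at ht
      simp only [Delta, hℓ, Set.mem_setOf_eq, norm_mul, Complex.norm_real,
        Real.norm_eq_abs, abs_of_pos ha, abs_of_pos hb, hc1]
      have h : ‖t‖ * a + ‖t‖ * (1 * b) = ‖t‖ := by rw [hbdef]; ring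
      rw [h]; exact ht
    have hℓdiff : Differentiable ℂ ℓ :=
      (differentiable_id.mul_const _).prodMk (differentiable_id.mul_const _)
    set φ : ℂ → ℂ := F ∘ ℓ with hφ
    have hφdiff : DifferentiableOn ℂ φ (ball (0 : ℂ) 1) :=
      hF.comp hℓdiff.differentiableOn hmaps
    have hφb : ∀ t ∈ ball (0 : ℂ) 1, ‖φ t‖ ≤ 1 := fun t ht => hFb _ (hmaps ht)
    have hℓ0 : ℓ 0 = ((0 : ℂ), (0 : ℂ)) := by simp [hℓ]
    have hφ0 : φ 0 = -(α : ℂ) := by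
      have h := hFT ((0 : ℂ), (0 : ℂ)) (mem_TT_left (by simp))
      simp only [hφ, Function.comp_apply, hℓ0]
      rw [h]; simp [bl]
    have hℓd : HasDerivAt ℓ ((a : ℂ), c * (b : ℂ)) 0 := by
      have h := ((hasDerivAt_id (0 : ℂ)).mul_const ((a : ℝ) : ℂ)).prodMk
        ((hasDerivAt_id (0 : ℂ)).mul_const (c * ((b : ℝ) : ℂ)))
      simpa [hℓ] using h
    have hφd : HasDerivAt φ (1 - (α : ℂ) ^ 2) 0 := by
      have hcomp : HasDerivAt φ (fderiv ℂ F (0, 0) ((a : ℂ), c * (b : ℂ))) 0 :=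
        hDF.comp_hasDerivAt_of_eq 0 hℓd hℓ0.symm
      have hsplit : (((a : ℂ), c * (b : ℂ)) : ℂ × ℂ)
          = (a : ℂ) • ((1 : ℂ), (0 : ℂ)) + (c * (b : ℂ)) • ((0 : ℂ), (1 : ℂ)) := by
        simp [Prod.ext_iff]
      have hval : fderiv ℂ F (0, 0) ((a : ℂ), c * (b : ℂ)) = 1 - (α : ℂ) ^ 2 := by
        rw [hsplit, map_add, map_smul, map_smul, hD1, hD2]
        simp only [smul_eq_mul]
        have hab : ((a : ℝ) : ℂ) + ((b : ℝ) : ℂ) = 1 := by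
          rw [hbdef]; push_cast; ring
        linear_combination (1 - (α : ℂ) ^ 2) * (b : ℂ) * hc + (1 - (α : ℂ) ^ 2) * hab
      rwa [hval] at hcomp
    set ψ : ℂ → ℂ := fun t => (φ t + (α : ℂ)) / (1 + (α : ℂ) * φ t) with hψ
    have hden : ∀ t ∈ ball (0 : ℂ) 1, (1 : ℂ) + (α : ℂ) * φ t ≠ 0 :=
      fun t ht => one_add_ne α hα (hφb t ht)
    have hψb : ∀ t ∈ ball (0 : ℂ) 1, ‖ψ t‖ ≤ 1 := by
      intro t ht
      rw [hψ]
      simp only []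
      rw [norm_div, div_le_one (norm_pos_iff.2 (hden t ht))]
      exact key_ineq α hα (hφb t ht)
    have hψdiff : DifferentiableOn ℂ ψ (ball (0 : ℂ) 1) :=
      DifferentiableOn.div (hφdiff.add_const _) ((hφdiff.const_mul _).const_add 1) hden
    have hψ0 : ψ 0 = 0 := by simp [hψ, hφ0]
    have hψd : HasDerivAt ψ 1 0 := by
      have hnum : HasDerivAt (fun t => φ t + (α : ℂ)) (1 - (α : ℂ) ^ 2) 0 := hφd.add_const _
      have hden' : HasDerivAt (fun t => 1 + (α : ℂ) * φ t) ((α : ℂ) * (1 - (α : ℂ) ^ 2)) 0 :=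
        (hφd.const_mul _).const_add 1
      have hd0 : (1 : ℂ) + (α : ℂ) * φ 0 ≠ 0 := hden 0 (mem_ball_self one_pos)
      have h := hnum.div hden' hd0
      refine h.congr_deriv (Eq.symm ?_)
      rw [hφ0]
      have hne : (1 : ℂ) + (α : ℂ) * -(α : ℂ) ≠ 0 := by
        intro h'; exact hα2ne (by linear_combination h')
      rw [eq_div_iff (pow_ne_zero 2 hne)]
      ring
    have hψball : Set.MapsTo ψ (ball (0 : ℂ) 1) (ball (ψ 0) 1) := by
      intro t ht
      rw [hψ0, mem_ball_zero_iff]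
      rcases lt_or_eq_of_le (hψb t ht) with h | h
      · exact h
      · exfalso
        have hmax : IsMaxOn (norm ∘ ψ) (ball (0 : ℂ) 1) t := by
          intro u hu
          simp only [Function.comp_apply, Set.mem_setOf_eq, h]
          exact hψb u hu
        have heqc := Complex.eqOn_of_isPreconnected_of_isMaxOn_norm
          (convex_ball (0 : ℂ) 1).isPreconnected isOpen_ball hψdiff ht hmax
        have hconst : HasDerivAt (fun _ : ℂ => ψ t) 1 0 := by
          apply hψd.congr_of_eventuallyEq
          filter_upwards [ball_mem_nhds (0 : ℂ) one_pos] with u hu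
          exact (heqc hu).symm
        exact one_ne_zero (hconst.unique (hasDerivAt_const 0 (ψ t)))
    have htb : t ∈ ball (0 : ℂ) 1 := mem_ball_zero_iff.2 htball
    have hdsl : dslope ψ 0 0 = 1 := by rw [dslope_same]; exact hψd.deriv
    have haff := Complex.affine_of_mapsTo_ball_of_exists_norm_dslope_eq_div hψdiff (hψball.mono_right ball_subset_closedBall)
      (mem_ball_self one_pos) (by rw [hdsl]; norm_num)
    have hψt : ψ t = t := by
      have h := haff htb
      rw [hψ0, hdsl] at h
      simpa using h
    have hdt : (1 : ℂ) + (α : ℂ) * φ t ≠ 0 := hden t htb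
    have hmul : φ t + (α : ℂ) = t * (1 + (α : ℂ) * φ t) := by
      rw [hψ] at hψt
      simp only [] at hψt
      rwa [div_eq_iff hdt] at hψt
    have h1t : (1 : ℂ) - (α : ℂ) * t ≠ 0 := one_sub_ne α hα htball.le
    have hφt : φ t = F (t * (a : ℂ), t * (c * (b : ℂ))) := rfl
    rw [← hφt, bl, eq_div_iff h1t]
    linear_combination hmul
  -- now the identity theorem step
  rintro ⟨z, w⟩ hp
  have hp' : ‖z‖ + ‖w‖ < 1 := hp
  by_cases hz : z = 0
  · subst hz
    exact hFT (0, w) (mem_TT_right (by simpa using hp'))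
  · have hz1 : ‖z‖ < 1 := lt_of_le_of_lt (le_add_of_nonneg_right (norm_nonneg w)) hp'
    have hzpos : 0 < ‖z‖ := norm_pos_iff.2 hz
    set R : ℝ := 1 - ‖z‖ with hR
    have hRpos : 0 < R := by rw [hR]; linarith
    have hckey : ∀ s : ℝ, 0 < s → s ≤ R →
        F (z, c * (s : ℂ) * z) = bl α (z + c * (c * (s : ℂ) * z)) := by
      intro s hspos hsle
      have h1s : (0 : ℝ) < 1 + s := by linarith
      have hcast : (1 + (s : ℂ)) ≠ 0 := by
        have h : ((1 + s : ℝ) : ℂ) ≠ 0 := Complex.ofReal_ne_zero.2 (ne_of_gt h1s)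
        push_cast at h; exact h
      have hapos : 0 < 1 / (1 + s) := by positivity
      have halt : 1 / (1 + s) < 1 := by rw [div_lt_one h1s]; linarith
      have htn : ‖z * ((1 + s : ℝ) : ℂ)‖ < 1 := by
        rw [norm_mul, Complex.norm_real, Real.norm_eq_abs, abs_of_pos h1s]
        nlinarith [norm_nonneg z]
      have hkey := hray (1 / (1 + s)) hapos halt (z * ((1 + s : ℝ) : ℂ)) htn
      have c1 : z * ((1 + s : ℝ) : ℂ) * (((1 / (1 + s) : ℝ)) : ℂ) = z := by
        push_cast
        field_simp
      have c2 : z * ((1 + s : ℝ) : ℂ) * (c * (((1 - 1 / (1 + s) : ℝ)) : ℂ)) =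
          c * (s : ℂ) * z := by
        have h : (1 - 1 / (1 + s) : ℝ) = s / (1 + s) := by field_simp; ring
        rw [h]; push_cast; field_simp
      rw [c1, c2] at hkey
      rw [hkey]
      congr 1
      push_cast
      linear_combination -(s : ℂ) * z * hc
    have hGdiff : DifferentiableOn ℂ (fun w' : ℂ => F (z, w')) (ball (0 : ℂ) R) := by
      apply hF.comp ((differentiable_const z).prodMk differentiable_id).differentiableOn
      intro w' hw'
      rw [mem_ball_zero_iff] at hw'
      show ‖z‖ + ‖w'‖ < 1
      rw [hR] at hw'; linarith
    have hHdiff : DifferentiableOn ℂ (fun w' : ℂ => bl α (z + c * w')) (ball (0 : ℂ) R) := by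
      apply DifferentiableOn.div
      · exact (((differentiable_const z).add ((differentiable_const c).mul
          differentiable_id)).sub_const _).differentiableOn
      · exact ((((differentiable_const z).add ((differentiable_const c).mul
          differentiable_id)).const_mul _).const_sub 1).differentiableOn
      · intro w' hw'
        rw [mem_ball_zero_iff] at hw'
        apply one_sub_ne α hα
        calc ‖z + c * w'‖ ≤ ‖z‖ + ‖c * w'‖ := norm_add_le _ _
          _ = ‖z‖ + ‖w'‖ := by rw [norm_mul, hc1, one_mul]
          _ ≤ 1 := by rw [hR] at hw'; linarith
    have hGa := hGdiff.analyticOnNhd isOpen_ball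
    have hHa := hHdiff.analyticOnNhd isOpen_ball
    set u : ℕ → ℂ := fun n => c * ((R / (n + 1) : ℝ) : ℂ) * z with hu
    have hu0 : Filter.Tendsto u Filter.atTop (nhdsWithin (0 : ℂ) {x | x ≠ 0}) := by
      rw [tendsto_nhdsWithin_iff]
      constructor
      · have h1 : Filter.Tendsto (fun n : ℕ => R / ((n : ℝ) + 1)) Filter.atTop (nhds 0) := by
          have h0 := tendsto_const_div_atTop_nhds_zero_nat R
          have h2 := h0.comp (Filter.tendsto_add_atTop_nat 1)
          have he : (fun n : ℕ => R / ((n : ℝ) + 1))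
              = (fun n : ℕ => R / (n : ℝ)) ∘ (fun n => n + 1) := by
            funext n; simp only [Function.comp_apply]; norm_cast
          rw [he]; exact h2
        have h2 : Filter.Tendsto (fun n : ℕ => ((R / ((n : ℝ) + 1) : ℝ) : ℂ)) Filter.atTop
            (nhds ((0 : ℝ) : ℂ)) := (Complex.continuous_ofReal.tendsto _).comp h1
        have h3 := (h2.const_mul c).mul_const z
        simpa [hu] using h3
      · apply Filter.Eventually.of_forall
        intro n
        have hn1 : (0 : ℝ) < (n : ℝ) + 1 := by positivity
        have h : R / ((n : ℝ) + 1) ≠ 0 := by positivity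
        simp only [hu, Set.mem_setOf_eq]
        exact mul_ne_zero (mul_ne_zero hc0 (Complex.ofReal_ne_zero.2 h)) hz
    have hfreq : ∃ᶠ w' in nhdsWithin (0 : ℂ) {x | x ≠ 0},
        F (z, w') = bl α (z + c * w') := by
      apply hu0.frequently
      apply Filter.Eventually.frequently
      apply Filter.Eventually.of_forall
      intro n
      have hn1 : (0 : ℝ) < (n : ℝ) + 1 := by positivity
      have hspos : 0 < R / ((n : ℝ) + 1) := by positivity
      have hsle : R / ((n : ℝ) + 1) ≤ R := by
        apply div_le_self hRpos.le
        simp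
      exact hckey _ hspos hsle
    have heqon := hGa.eqOn_of_preconnected_of_frequently_eq hHa
      (convex_ball (0 : ℂ) R).isPreconnected (mem_ball_self hRpos) hfreq
    exact heqon (mem_ball_zero_iff.2 (by rw [hR]; linarith))

def ff (α : ℝ) (c : ℂ) : ℂ × ℂ → ℂ := fun p => bl α (p.1 + c * p.2)

lemma norm_arg_TT {c : ℂ} (hc1 : ‖c‖ = 1) {p : ℂ × ℂ} (hp : p ∈ TT) :
    ‖p.1 + c * p.2‖ < 1 := by
  rcases hp with ⟨h1, h2⟩ | ⟨h1, h2⟩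
  · rw [h2]; simpa [uD, mem_ball_zero_iff] using h1
  · rw [h1]
    have : ‖c * p.2‖ = ‖p.2‖ := by rw [norm_mul, hc1, one_mul]
    rw [zero_add, this]
    simpa [uD, mem_ball_zero_iff] using h2

lemma norm_arg_Delta {c : ℂ} (hc1 : ‖c‖ = 1) {p : ℂ × ℂ} (hp : p ∈ Delta) :
    ‖p.1 + c * p.2‖ < 1 := by
  have h : ‖p.1‖ + ‖p.2‖ < 1 := hp
  calc ‖p.1 + c * p.2‖ ≤ ‖p.1‖ + ‖c * p.2‖ := norm_add_le _ _
    _ = ‖p.1‖ + ‖p.2‖ := by rw [norm_mul, hc1, one_mul]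
    _ < 1 := h

lemma diffOn_ff (α : ℝ) (c : ℂ) {U : Set (ℂ × ℂ)}
    (h : ∀ q ∈ U, (1 : ℂ) - (α : ℂ) * (q.1 + c * q.2) ≠ 0) :
    DifferentiableOn ℂ (ff α c) U := by
  unfold ff bl
  have h1 : DifferentiableOn ℂ (fun q : ℂ × ℂ => q.1 + c * q.2 - (α : ℂ)) U :=
    ((differentiable_fst.add ((differentiable_const c).mul
      differentiable_snd)).sub_const _).differentiableOn
  have h2 : DifferentiableOn ℂ (fun q : ℂ × ℂ => 1 - (α : ℂ) * (q.1 + c * q.2)) U :=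
    (((differentiable_fst.add ((differentiable_const c).mul
      differentiable_snd)).const_mul _).const_sub 1).differentiableOn
  simp only [div_eq_mul_inv]
  exact h1.mul (h2.inv h)

lemma holoT_ff (α : ℝ) (hα : |α| ≤ 1/2) (c : ℂ) (hc1 : ‖c‖ = 1) : HoloOnT (ff α c) := by
  intro p hp
  refine ⟨{q : ℂ × ℂ | (1 : ℂ) - (α : ℂ) * (q.1 + c * q.2) ≠ 0}, ?_, ?_, ff α c, ?_,
    fun q _ => rfl⟩
  · have he : {q : ℂ × ℂ | (1 : ℂ) - (α : ℂ) * (q.1 + c * q.2) ≠ 0}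
        = (fun q : ℂ × ℂ => (1 : ℂ) - (α : ℂ) * (q.1 + c * q.2)) ⁻¹' {0}ᶜ := rfl
    rw [he]
    apply IsOpen.preimage
    · fun_prop
    · exact isOpen_compl_singleton
  · exact one_sub_ne α hα (norm_arg_TT hc1 hp).le
  · exact diffOn_ff α c (fun q hq => hq)

lemma holoOnT_sub {f g : ℂ × ℂ → ℂ} (hf : HoloOnT f) (hg : HoloOnT g) :
    HoloOnT (f - g) := by
  intro p hp
  obtain ⟨U, hU, hpU, Ff, hFf, hFfe⟩ := hf p hp
  obtain ⟨V, hV, hpV, Fg, hFg, hFge⟩ := hg p hp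
  refine ⟨U ∩ V, hU.inter hV, ⟨hpU, hpV⟩, Ff - Fg,
    (hFf.mono Set.inter_subset_left).sub (hFg.mono Set.inter_subset_right), ?_⟩
  intro q hq
  have h1 := hFfe q ⟨hq.1.1, hq.2⟩
  have h2 := hFge q ⟨hq.1.2, hq.2⟩
  simp only [Pi.sub_apply, h1, h2]

lemma holoOnT_add {f g : ℂ × ℂ → ℂ} (hf : HoloOnT f) (hg : HoloOnT g) :
    HoloOnT (f + g) := by
  intro p hp
  obtain ⟨U, hU, hpU, Ff, hFf, hFfe⟩ := hf p hp
  obtain ⟨V, hV, hpV, Fg, hFg, hFge⟩ := hg p hp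
  refine ⟨U ∩ V, hU.inter hV, ⟨hpU, hpV⟩, Ff + Fg,
    (hFf.mono Set.inter_subset_left).add (hFg.mono Set.inter_subset_right), ?_⟩
  intro q hq
  have h1 := hFfe q ⟨hq.1.1, hq.2⟩
  have h2 := hFge q ⟨hq.1.2, hq.2⟩
  simp only [Pi.add_apply, h1, h2]


/-- There is no linear norm-preserving extension operator from the bounded holomorphic
functions on `T` to the bounded holomorphic functions on `Δ`. -/
theorem stmt_5 :
    ¬ ∃ E : (ℂ × ℂ → ℂ) →ₗ[ℂ] (ℂ × ℂ → ℂ),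
        ∀ f : ℂ × ℂ → ℂ, HoloOnT f → BddOnT f →
          DifferentiableOn ℂ (E f) Delta ∧ (∀ p ∈ TT, E f p = f p) ∧
            supOn (E f) Delta = supOn f TT := by
  rintro ⟨E, hE⟩
  -- the four basic functions have unique extensions, forced to be themselves
  have key : ∀ (α : ℝ), |α| = 1/2 → ∀ (c : ℂ), c * c = 1 →
      ∀ p ∈ Delta, E (ff α c) p = ff α c p := by
    intro α hα c hc
    have hα' : |α| ≤ 1/2 := le_of_eq hα
    have hc1 : ‖c‖ = 1 := by
      have h : ‖c‖ * ‖c‖ = 1 := by rw [← norm_mul, hc]; simp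
      nlinarith [norm_nonneg c]
    obtain ⟨hdiff, hT, hsup⟩ := hE (ff α c) (holoT_ff α hα' c hc1)
      ⟨1, fun p hp => norm_bl_le α hα' (norm_arg_TT hc1 hp).le⟩
    have hTbdd : BddAbove ((fun p => ‖ff α c p‖) '' TT) := by
      refine ⟨1, ?_⟩
      rintro x ⟨p, hp, rfl⟩
      exact norm_bl_le α hα' (norm_arg_TT hc1 hp).le
    have hTle : supOn (ff α c) TT ≤ 1 := by
      apply Real.sSup_le _ one_pos.le
      rintro x ⟨p, hp, rfl⟩
      exact norm_bl_le α hα' (norm_arg_TT hc1 hp).le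
    have hval : ‖ff α c ((0 : ℂ), (0 : ℂ))‖ = 1/2 := by
      simp [ff, bl, Complex.norm_real, Real.norm_eq_abs, hα]
    have hTge : (1/2 : ℝ) ≤ supOn (ff α c) TT := by
      rw [← hval]
      exact le_csSup hTbdd ⟨((0 : ℂ), (0 : ℂ)), mem_TT_left (by simp), rfl⟩
    have hDb : BddAbove ((fun p => ‖E (ff α c) p‖) '' Delta) := by
      by_contra hcon
      have h0 := Real.sSup_of_not_bddAbove hcon
      rw [supOn, supOn, h0] at hsup
      rw [supOn] at hTge
      linarith
    have hFb : ∀ p ∈ Delta, ‖E (ff α c) p‖ ≤ 1 := by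
      intro p hp
      have h1 : ‖E (ff α c) p‖ ≤ supOn (E (ff α c)) Delta :=
        le_csSup hDb ⟨p, hp, rfl⟩
      rw [hsup] at h1
      linarith
    exact uniq α hα' c hc hdiff hFb (fun p hp => (hT p hp).trans rfl)
  -- the combination vanishing on T
  set g : ℂ × ℂ → ℂ := ff (1/2) 1 - ff (1/2) (-1) - ff (-1/2) 1 + ff (-1/2) (-1) with hg
  have hgT : ∀ p ∈ TT, g p = 0 := by
    rintro ⟨z, w⟩ hp
    rcases hp with ⟨h1, h2⟩ | ⟨h1, h2⟩
    · have hw0 : w = 0 := h2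
      subst hw0
      show ff (1/2) 1 (z, 0) - ff (1/2) (-1) (z, 0) - ff (-1/2) 1 (z, 0)
        + ff (-1/2) (-1) (z, 0) = 0
      simp only [ff, bl]
      norm_num
    · have hz0 : z = 0 := h1
      subst hz0
      have hw : ‖w‖ < 1 := by simpa [uD, mem_ball_zero_iff] using h2
      have hne1 : (1 : ℂ) - ((1/2 : ℝ) : ℂ) * w ≠ 0 :=
        one_sub_ne (1/2) (by norm_num [abs_div]) hw.le
      have hne2 : (1 : ℂ) + ((1/2 : ℝ) : ℂ) * w ≠ 0 := by
        have h := one_sub_ne (1/2) (by norm_num [abs_div]) (s := -w) (by simpa using hw.le)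
        simpa [sub_eq_add_neg, mul_neg] using h
      show ff (1/2) 1 (0, w) - ff (1/2) (-1) (0, w) - ff (-1/2) 1 (0, w)
        + ff (-1/2) (-1) (0, w) = 0
      simp only [ff, bl]
      push_cast at hne1 hne2 ⊢
      field_simp
      ring
  have hgholo : HoloOnT g := by
    have h1 := holoT_ff (1/2) (by norm_num [abs_div]) 1 (by norm_num)
    have h2 := holoT_ff (1/2) (by norm_num [abs_div]) (-1) (by norm_num)
    have h3 := holoT_ff (-1/2) (by norm_num [abs_div]) 1 (by norm_num)
    have h4 := holoT_ff (-1/2) (by norm_num [abs_div]) (-1) (by norm_num)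
    exact holoOnT_add (holoOnT_sub (holoOnT_sub h1 h2) h3) h4
  have hgbdd : BddOnT g := ⟨0, fun p hp => by rw [hgT p hp]; simp⟩
  obtain ⟨hdg, htg, hsg⟩ := hE g hgholo hgbdd
  have hsgT : supOn g TT = 0 := by
    have himg : (fun p => ‖g p‖) '' TT = {0} := by
      apply Set.eq_singleton_iff_unique_mem.mpr
      constructor
      · refine ⟨((0 : ℂ), (0 : ℂ)), mem_TT_left (by simp), ?_⟩
        show ‖g ((0 : ℂ), (0 : ℂ))‖ = 0
        rw [hgT _ (mem_TT_left (by simp))]; simp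
      · rintro x ⟨p, hp, rfl⟩
        show ‖g p‖ = 0
        rw [hgT p hp]; simp
    rw [supOn, himg, csSup_singleton]
  have hlin : ∀ p : ℂ × ℂ, E g p = E (ff (1/2) 1) p - E (ff (1/2) (-1)) p
      - E (ff (-1/2) 1) p + E (ff (-1/2) (-1)) p := by
    intro p
    rw [hg, map_add, map_sub, map_sub]
    simp [Pi.add_apply, Pi.sub_apply]
  set p₀ : ℂ × ℂ := ((1/4 : ℂ), (1/4 : ℂ)) with hp₀
  have hq : ‖(1/4 : ℂ)‖ = 1/4 := by
    rw [norm_div]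
    simp
  have hp₀D : p₀ ∈ Delta := by
    show ‖(1/4 : ℂ)‖ + ‖(1/4 : ℂ)‖ < 1
    rw [hq]; norm_num
  have hEp : ∀ p ∈ Delta, E g p = ff (1/2) 1 p - ff (1/2) (-1) p
      - ff (-1/2) 1 p + ff (-1/2) (-1) p := by
    intro p hp
    rw [hlin p, key (1/2) (by norm_num [abs_div]) 1 (by norm_num) p hp,
      key (1/2) (by norm_num [abs_div]) (-1) (by norm_num) p hp,
      key (-1/2) (by norm_num [abs_div]) 1 (by norm_num) p hp,
      key (-1/2) (by norm_num [abs_div]) (-1) (by norm_num) p hp]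
  have hval : E g p₀ = 1/5 := by
    rw [hEp p₀ hp₀D]
    show bl (1/2) ((1/4 : ℂ) + 1 * (1/4 : ℂ)) - bl (1/2) ((1/4 : ℂ) + (-1) * (1/4 : ℂ))
      - bl (-1/2) ((1/4 : ℂ) + 1 * (1/4 : ℂ)) + bl (-1/2) ((1/4 : ℂ) + (-1) * (1/4 : ℂ)) = 1/5
    rw [bl, bl, bl, bl]
    push_cast
    norm_num
  have hzero : E g p₀ = 0 := by
    have hDb : BddAbove ((fun p => ‖E g p‖) '' Delta) := by
      refine ⟨4, ?_⟩
      rintro x ⟨p, hp, rfl⟩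
      show ‖E g p‖ ≤ 4
      rw [hEp p hp]
      have b1 := norm_bl_le (1/2) (by norm_num [abs_div]) (norm_arg_Delta (c := 1) (by norm_num) hp).le
      have b2 := norm_bl_le (1/2) (by norm_num [abs_div]) (norm_arg_Delta (c := -1) (by norm_num) hp).le
      have b3 := norm_bl_le (-1/2) (by norm_num [abs_div]) (norm_arg_Delta (c := 1) (by norm_num) hp).le
      have b4 := norm_bl_le (-1/2) (by norm_num [abs_div]) (norm_arg_Delta (c := -1) (by norm_num) hp).le
      calc ‖ff (1/2) 1 p - ff (1/2) (-1) p - ff (-1/2) 1 p + ff (-1/2) (-1) p‖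
          ≤ ‖ff (1/2) 1 p - ff (1/2) (-1) p - ff (-1/2) 1 p‖ + ‖ff (-1/2) (-1) p‖ :=
            norm_add_le _ _
        _ ≤ ‖ff (1/2) 1 p - ff (1/2) (-1) p‖ + ‖ff (-1/2) 1 p‖ + ‖ff (-1/2) (-1) p‖ := by
            have := norm_sub_le (ff (1/2) 1 p - ff (1/2) (-1) p) (ff (-1/2) 1 p)
            linarith
        _ ≤ ‖ff (1/2) 1 p‖ + ‖ff (1/2) (-1) p‖ + ‖ff (-1/2) 1 p‖ + ‖ff (-1/2) (-1) p‖ := by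
            have := norm_sub_le (ff (1/2) 1 p) (ff (1/2) (-1) p)
            linarith
        _ ≤ 4 := by
            simp only [ff] at *
            linarith
    have h1 : ‖E g p₀‖ ≤ supOn (E g) Delta := le_csSup hDb ⟨p₀, hp₀D, rfl⟩
    rw [hsg, hsgT] at h1
    exact norm_le_zero_iff.1 h1
  rw [hzero] at hval
  exact absurd hval.symm (by norm_num)
end
end

section
/- Let a ∈ ℂ with |a| < 1, let m_a(z) = (a − z)/(1 − conj(a)·z), and let f₁, f₂ : 𝔻 → ℂ be holomorphic with |f₁| ≤ 1, |f₂| ≤ 1 and f₁(0) = f₂(0) = a. Then for every λ ∈ Δ the point m_a(f₁(λ₁)) + m_a(f₂(λ₂)) lies in 𝔻, so that F(λ) = m_a( m_a(f₁(λ₁)) + m_a(f₂(λ₂)) ) is well defined; F is holomorphic on Δ, satisfies |F(λ)| ≤ 1 for all λ ∈ Δ, and F(z,0) = f₁(z), F(0,z) = f₂(z) for all z ∈ 𝔻. In particular F is a norm-preserving extension to Δ of the function on T determined by f₁ and f₂. -/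
open Metric

noncomputable section

/-- The Möbius map `m_a(z) = (a - z)/(1 - ā z)`. -/
def ma (a z : ℂ) : ℂ := (a - z) / (1 - (starRingEnd ℂ) a * z)

lemma den_ne (a w : ℂ) (ha : ‖a‖ < 1) (hw : ‖w‖ ≤ 1) : 1 - (starRingEnd ℂ) a * w ≠ 0 := by
  intro h
  have h1 : (starRingEnd ℂ) a * w = 1 := by linear_combination -h
  have h2 : ‖(starRingEnd ℂ) a * w‖ < 1 := by
    rw [norm_mul, RCLike.norm_conj]
    nlinarith [norm_nonneg a, norm_nonneg w]
  rw [h1] at h2; simp at h2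

lemma normSq_key (a w : ℂ) :
    Complex.normSq (1 - (starRingEnd ℂ) a * w) - Complex.normSq (a - w)
      = (1 - Complex.normSq a) * (1 - Complex.normSq w) := by
  simp [Complex.normSq_apply, Complex.mul_re, Complex.mul_im, Complex.sub_re, Complex.sub_im]
  ring

lemma sq_norm_eq (z : ℂ) : ‖z‖ ^ 2 = Complex.normSq z := by
  rw [Complex.sq_norm]

lemma ma_norm_le (a w : ℂ) (ha : ‖a‖ < 1) (hw : ‖w‖ ≤ 1) : ‖ma a w‖ ≤ 1 := by
  have hd := den_ne a w ha hw
  rw [ma, norm_div, div_le_one (norm_pos_iff.mpr hd)]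
  have hk := normSq_key a w
  rw [← sq_norm_eq, ← sq_norm_eq, ← sq_norm_eq, ← sq_norm_eq] at hk
  have hprod : 0 ≤ (1 - ‖a‖ ^ 2) * (1 - ‖w‖ ^ 2) := by
    apply mul_nonneg <;> nlinarith [norm_nonneg a, norm_nonneg w]
  have hsq : ‖a - w‖ ^ 2 ≤ ‖1 - (starRingEnd ℂ) a * w‖ ^ 2 := by linarith
  nlinarith [norm_nonneg (a - w), norm_nonneg (1 - (starRingEnd ℂ) a * w)]

lemma ma_norm_lt (a w : ℂ) (ha : ‖a‖ < 1) (hw : ‖w‖ < 1) : ‖ma a w‖ < 1 := by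
  have hd := den_ne a w ha hw.le
  rw [ma, norm_div, div_lt_one (norm_pos_iff.mpr hd)]
  have hk := normSq_key a w
  rw [← sq_norm_eq, ← sq_norm_eq, ← sq_norm_eq, ← sq_norm_eq] at hk
  have hprod : 0 < (1 - ‖a‖ ^ 2) * (1 - ‖w‖ ^ 2) := by
    apply mul_pos <;> nlinarith [norm_nonneg a, norm_nonneg w]
  have hsq : ‖a - w‖ ^ 2 < ‖1 - (starRingEnd ℂ) a * w‖ ^ 2 := by linarith
  nlinarith [norm_nonneg (a - w), norm_nonneg (1 - (starRingEnd ℂ) a * w)]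

lemma ma_invol (a w : ℂ) (ha : ‖a‖ < 1) (hw : ‖w‖ ≤ 1) : ma a (ma a w) = w := by
  have hd := den_ne a w ha hw
  have hd2 : 1 - (starRingEnd ℂ) a * a ≠ 0 := by
    intro h
    have h1 : (starRingEnd ℂ) a * a = 1 := by linear_combination -h
    have h2 : ‖(starRingEnd ℂ) a * a‖ < 1 := by
      rw [norm_mul, RCLike.norm_conj]; nlinarith [norm_nonneg a]
    rw [h1] at h2; simp at h2
  have key : 1 - (starRingEnd ℂ) a * ma a w
      = (1 - (starRingEnd ℂ) a * a) / (1 - (starRingEnd ℂ) a * w) := by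
    rw [ma]; field_simp; ring
  rw [ma, key, div_div_eq_mul_div, ma]
  rw [sub_mul, div_mul_cancel₀ _ hd, div_eq_iff hd2]
  ring

lemma ma_self (a : ℂ) : ma a a = 0 := by
  rw [ma, sub_self, zero_div]

lemma diff_ma {E : Type*} [NormedAddCommGroup E] [NormedSpace ℂ E]
    {g : E → ℂ} {a : ℂ} {x : E} (hg : DifferentiableAt ℂ g x)
    (h : 1 - (starRingEnd ℂ) a * g x ≠ 0) :
    DifferentiableAt ℂ (fun y => ma a (g y)) x := by
  simp only [ma, div_eq_mul_inv]
  exact (hg.const_sub a).mul (((hg.const_mul ((starRingEnd ℂ) a)).const_sub 1).inv h)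

theorem stmt_6 (a : ℂ) (ha : ‖a‖ < 1) (f₁ f₂ : ℂ → ℂ)
    (hf₁ : DifferentiableOn ℂ f₁ uD) (hf₂ : DifferentiableOn ℂ f₂ uD)
    (hb₁ : ∀ z ∈ uD, ‖f₁ z‖ ≤ 1) (hb₂ : ∀ z ∈ uD, ‖f₂ z‖ ≤ 1)
    (h₁0 : f₁ 0 = a) (h₂0 : f₂ 0 = a) :
    (∀ p ∈ Delta, ma a (f₁ p.1) + ma a (f₂ p.2) ∈ uD) ∧
    DifferentiableOn ℂ (fun p : ℂ × ℂ => ma a (ma a (f₁ p.1) + ma a (f₂ p.2))) Delta ∧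
    (∀ p ∈ Delta, ‖ma a (ma a (f₁ p.1) + ma a (f₂ p.2))‖ ≤ 1) ∧
    (∀ z ∈ uD, ma a (ma a (f₁ z) + ma a (f₂ 0)) = f₁ z) ∧
    (∀ z ∈ uD, ma a (ma a (f₁ 0) + ma a (f₂ z)) = f₂ z) := by
  -- Schwarz lemma for ma a ∘ f
  have schwarz : ∀ (f : ℂ → ℂ), DifferentiableOn ℂ f uD → (∀ z ∈ uD, ‖f z‖ ≤ 1) →
      f 0 = a → ∀ z ∈ uD, ‖ma a (f z)‖ ≤ ‖z‖ := by
    intro f hf hb hf0 z hz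
    have hgd : DifferentiableOn ℂ (fun z => ma a (f z)) uD := by
      intro x hx
      exact (diff_ma (hf.differentiableAt (isOpen_ball.mem_nhds hx))
        (den_ne a (f x) ha (hb x hx))).differentiableWithinAt
    have hg0 : ma a (f 0) = 0 := by rw [hf0]; exact ma_self a
    have hz1 : ‖z‖ ≤ 1 := le_of_lt (mem_ball_zero_iff.mp hz)
    refine le_of_forall_pos_le_add ?_
    intro ε hε
    have hmaps : Set.MapsTo (fun z => ma a (f z)) (ball (0:ℂ) 1) (ball (ma a (f 0)) (1 + ε)) := by
      intro x hx
      rw [hg0, mem_ball_zero_iff]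
      calc ‖ma a (f x)‖ ≤ 1 := ma_norm_le a (f x) ha (hb x hx)
      _ < 1 + ε := by linarith
    have key := Complex.dist_le_div_mul_dist_of_mapsTo_ball (R₁ := 1) (R₂ := 1 + ε)
      hgd (hmaps.mono_right ball_subset_closedBall) hz
    rw [hg0, dist_zero_right, dist_zero_right, div_one] at key
    have : (1 + ε) * ‖z‖ ≤ ‖z‖ + ε := by nlinarith [norm_nonneg z]
    linarith
  have sumlt : ∀ p ∈ Delta, ‖ma a (f₁ p.1) + ma a (f₂ p.2)‖ < 1 := by
    intro p hp
    have hpd : ‖p.1‖ + ‖p.2‖ < 1 := hp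
    have hp1 : p.1 ∈ uD := by
      simp only [uD, mem_ball_zero_iff]
      have := norm_nonneg p.2; linarith
    have hp2 : p.2 ∈ uD := by
      simp only [uD, mem_ball_zero_iff]
      have := norm_nonneg p.1; linarith
    calc ‖ma a (f₁ p.1) + ma a (f₂ p.2)‖ ≤ ‖ma a (f₁ p.1)‖ + ‖ma a (f₂ p.2)‖ := norm_add_le _ _
      _ ≤ ‖p.1‖ + ‖p.2‖ := add_le_add (schwarz f₁ hf₁ hb₁ h₁0 p.1 hp1)
          (schwarz f₂ hf₂ hb₂ h₂0 p.2 hp2)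
      _ < 1 := hpd
  have mem1 : ∀ p ∈ Delta, ma a (f₁ p.1) + ma a (f₂ p.2) ∈ uD := by
    intro p hp
    simpa [uD, mem_ball_zero_iff] using sumlt p hp
  refine ⟨mem1, ?_, ?_, ?_, ?_⟩
  · intro p hp
    have hpd : ‖p.1‖ + ‖p.2‖ < 1 := hp
    have hp1 : p.1 ∈ uD := by
      simp only [uD, mem_ball_zero_iff]; have := norm_nonneg p.2; linarith
    have hp2 : p.2 ∈ uD := by
      simp only [uD, mem_ball_zero_iff]; have := norm_nonneg p.1; linarith
    have hd1 : DifferentiableAt ℂ (fun q : ℂ × ℂ => ma a (f₁ q.1)) p :=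
      diff_ma ((hf₁.differentiableAt (isOpen_ball.mem_nhds hp1)).comp p differentiableAt_fst)
        (den_ne a (f₁ p.1) ha (hb₁ p.1 hp1))
    have hd2 : DifferentiableAt ℂ (fun q : ℂ × ℂ => ma a (f₂ q.2)) p :=
      diff_ma ((hf₂.differentiableAt (isOpen_ball.mem_nhds hp2)).comp p differentiableAt_snd)
        (den_ne a (f₂ p.2) ha (hb₂ p.2 hp2))
    exact (diff_ma (hd1.add hd2)
      (den_ne a _ ha (le_of_lt (sumlt p hp)))).differentiableWithinAt
  · intro p hp
    exact ma_norm_le a _ ha (le_of_lt (sumlt p hp))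
  · intro z hz
    rw [h₂0, ma_self a, add_zero]
    exact ma_invol a (f₁ z) ha (hb₁ z hz)
  · intro z hz
    rw [h₁0, ma_self a, zero_add]
    exact ma_invol a (f₂ z) ha (hb₂ z hz)
end
end

section
/- Let H = {λ ∈ 𝔻² : |λ₂|/(1−|λ₂|) < (1/2)·(1−|λ₁|)/(1+|λ₁|)} ∪ {λ ∈ 𝔻² : |λ₁|/(1−|λ₁|) < (1/2)·(1−|λ₂|)/(1+|λ₂|)}. For a bounded holomorphic function f on T determined by the pair (f₁,f₂), define (Ef)(λ) = f₁(λ₁) + f₂(λ₂) − f₁(0) for λ ∈ 𝔻². Then T ⊆ H, and for every nonconstant bounded holomorphic f on T and every λ ∈ H one has |Ef(λ)| < sup_{μ∈T} |f(μ)|. (Consequently the linear operator E gives a linear norm-preserving extension for a suitable open set G with T ⊆ H ⊆ G ⊆ 𝔻².) -/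
open Metric

noncomputable section

/-- The set `H ⊆ 𝔻²` from the proof of the linear extension theorem for `(G,T)`. -/
def Hset : Set (ℂ × ℂ) :=
  {p | (p.1 ∈ uD ∧ p.2 ∈ uD) ∧
    (‖p.2‖ / (1 - ‖p.2‖) < (1 / 2) * ((1 - ‖p.1‖) / (1 + ‖p.1‖)) ∨
     ‖p.1‖ / (1 - ‖p.1‖) < (1 / 2) * ((1 - ‖p.2‖) / (1 + ‖p.2‖)))}

/-! ### Auxiliary lemmas -/

lemma moebius_normSq (a w : ℂ) :
    Complex.normSq (1 - (starRingEnd ℂ) a * w) - Complex.normSq (w - a)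
      = (1 - Complex.normSq a) * (1 - Complex.normSq w) := by
  simp only [Complex.normSq_apply, Complex.sub_re, Complex.sub_im, Complex.mul_re, Complex.mul_im,
    Complex.conj_re, Complex.conj_im, Complex.one_re, Complex.one_im]
  ring

/-- Schwarz–Pick inequality at the origin. -/
lemma sp_core (u : ℂ → ℂ) (hd : DifferentiableOn ℂ u (ball 0 1))
    (hm : Set.MapsTo u (ball 0 1) (ball 0 1)) {z : ℂ} (hz : z ∈ ball (0:ℂ) 1) :
    ‖u z - u 0‖ ≤ ‖z‖ * ‖1 - (starRingEnd ℂ) (u 0) * u z‖ := by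
  have h0 : (0:ℂ) ∈ ball (0:ℂ) 1 := by simp
  set a := u 0 with ha
  have haD : a ∈ ball (0:ℂ) 1 := hm h0
  have hanorm : ‖a‖ < 1 := by simpa [mem_ball_zero_iff] using haD
  have hden : ∀ w ∈ ball (0:ℂ) 1, 1 - (starRingEnd ℂ) a * w ≠ 0 := by
    intro w hw
    have hw' : ‖w‖ < 1 := by simpa [mem_ball_zero_iff] using hw
    intro h
    have hlt : ‖(starRingEnd ℂ) a * w‖ < 1 := by
      rw [norm_mul, RCLike.norm_conj]
      nlinarith [norm_nonneg a, norm_nonneg w]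
    have h1 : (1:ℂ) = (starRingEnd ℂ) a * w := by linear_combination h
    rw [← h1] at hlt
    simp at hlt
  set g : ℂ → ℂ := fun w => (u w - a) / (1 - (starRingEnd ℂ) a * u w) with hg
  have hgd : DifferentiableOn ℂ g (ball 0 1) := by
    apply DifferentiableOn.div
    · exact hd.sub_const a
    · exact (differentiableOn_const _).sub ((differentiableOn_const _).mul hd)
    · intro w hw; exact hden _ (hm hw)
  have key : ∀ b ∈ ball (0:ℂ) 1, ‖b - a‖ < ‖1 - (starRingEnd ℂ) a * b‖ := by
    intro b hb
    have hb' : ‖b‖ < 1 := by simpa [mem_ball_zero_iff] using hb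
    have hsq : ‖b - a‖^2 < ‖1 - (starRingEnd ℂ) a * b‖^2 := by
      rw [← Complex.normSq_eq_norm_sq, ← Complex.normSq_eq_norm_sq]
      have h1 : Complex.normSq a < 1 := by
        rw [Complex.normSq_eq_norm_sq]; nlinarith [norm_nonneg a]
      have h2 : Complex.normSq b < 1 := by
        rw [Complex.normSq_eq_norm_sq]; nlinarith [norm_nonneg b]
      nlinarith [moebius_normSq a b, mul_pos (by linarith : (0:ℝ) < 1 - Complex.normSq a)
        (by linarith : (0:ℝ) < 1 - Complex.normSq b)]
    exact lt_of_pow_lt_pow_left₀ 2 (norm_nonneg _) hsq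
  have hgm : Set.MapsTo g (ball 0 1) (ball 0 1) := by
    intro w hw
    rw [mem_ball_zero_iff, hg]
    simp only
    rw [norm_div]
    rw [div_lt_one (lt_of_le_of_lt (norm_nonneg _) (key _ (hm hw)))]
    exact key _ (hm hw)
  have hg0 : g 0 = 0 := by simp [hg, ha]
  have hsch : ‖g z‖ ≤ ‖z‖ :=
    Complex.norm_le_norm_of_mapsTo_ball hgd (hgm.mono_right ball_subset_closedBall) hg0
      (by simpa [mem_ball_zero_iff] using hz)
  have hfac : u z - a = g z * (1 - (starRingEnd ℂ) a * u z) := by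
    rw [hg]; exact (div_mul_cancel₀ _ (hden _ (hm hz))).symm
  rw [hfac, norm_mul]
  have : ‖g z‖ ≤ ‖z‖ := by simpa using hsch
  exact mul_le_mul_of_nonneg_right this (norm_nonneg _)

lemma nsq1 (c w : ℂ) : Complex.normSq (w - c)
    = ‖w‖^2 - 2*((starRingEnd ℂ) c * w).re + ‖c‖^2 := by
  rw [← Complex.normSq_eq_norm_sq, ← Complex.normSq_eq_norm_sq]
  simp only [Complex.normSq_apply, Complex.sub_re, Complex.sub_im, Complex.mul_re, Complex.mul_im,
    Complex.conj_re, Complex.conj_im]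
  ring

lemma nsq2 (c w : ℂ) : Complex.normSq (1 - (starRingEnd ℂ) c * w)
    = 1 - 2*((starRingEnd ℂ) c * w).re + ‖c‖^2 * ‖w‖^2 := by
  rw [← Complex.normSq_eq_norm_sq, ← Complex.normSq_eq_norm_sq]
  simp only [Complex.normSq_apply, Complex.sub_re, Complex.sub_im, Complex.mul_re, Complex.mul_im,
    Complex.conj_re, Complex.conj_im, Complex.one_re, Complex.one_im]
  ring

set_option maxHeartbeats 1000000 in
lemma key1 (u : ℂ → ℂ) (hd : DifferentiableOn ℂ u (ball 0 1))
    (hm : Set.MapsTo u (ball 0 1) (ball 0 1)) {z : ℂ} (hz : z ∈ ball (0:ℂ) 1) :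
    (1 - ‖u 0‖) * (1 - ‖z‖) ≤ (1 - ‖u z‖) * (1 + ‖z‖) := by
  have hsp := sp_core u hd hm hz
  set a := u 0 with ha
  set ρ := ‖a‖ with hρ
  set s := ‖u z‖ with hs
  set r := ‖z‖ with hr
  set x := ((starRingEnd ℂ) a * u z).re with hx
  have hρ1 : ρ < 1 := by simpa [mem_ball_zero_iff] using hm (by simp : (0:ℂ) ∈ ball (0:ℂ) 1)
  have hs1 : s < 1 := by simpa [mem_ball_zero_iff] using hm hz
  have hr1 : r < 1 := by simpa [mem_ball_zero_iff] using hz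
  have hρ0 : 0 ≤ ρ := norm_nonneg _
  have hs0 : 0 ≤ s := norm_nonneg _
  have hr0 : 0 ≤ r := norm_nonneg _
  have hxb : |x| ≤ ρ * s := by
    calc |x| ≤ ‖(starRingEnd ℂ) a * u z‖ := Complex.abs_re_le_norm _
    _ = ρ * s := by rw [norm_mul, RCLike.norm_conj]
  have hx1 : x ≤ ρ * s := le_of_abs_le hxb
  have hx2 : -(ρ * s) ≤ x := neg_le_of_abs_le hxb
  have hq : s^2 - 2*x + ρ^2 ≤ r^2 * (1 - 2*x + ρ^2 * s^2) := by
    have h2 := mul_self_le_mul_self (norm_nonneg (u z - a)) hsp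
    have e1 := nsq1 a (u z)
    have e2 := nsq2 a (u z)
    rw [Complex.normSq_eq_norm_sq] at e1 e2
    nlinarith [norm_nonneg (1 - (starRingEnd ℂ) a * u z)]
  have hρr : ρ * r < 1 := by nlinarith
  have ht : 0 ≤ (1 - r^2) * (ρ*s - x) := by
    apply mul_nonneg (by nlinarith) (by linarith)
  have hP : ((1+ρ*r)*s - (ρ+r)) * ((1-ρ*r)*s - (ρ-r)) ≤ 0 := by nlinarith [hq, ht]
  have stepA : s * (1 + ρ*r) ≤ ρ + r := by
    by_contra hcon
    push_neg at hcon
    have hf1 : 0 < (1+ρ*r)*s - (ρ+r) := by nlinarith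
    have hf2 : 0 < (1-ρ*r)*s - (ρ-r) := by
      have hsq : (0:ℝ) ≤ 1 - ρ^2 := by nlinarith
      have h2r : 0 ≤ 2*r*(1-ρ^2) := by positivity
      have hpr : 0 ≤ ρ * r := mul_nonneg hρ0 hr0
      nlinarith [mul_pos (by linarith : (0:ℝ) < 1 - ρ*r) (by linarith : (0:ℝ) < 1 + ρ*r)]
    nlinarith [mul_pos hf1 hf2]
  have hfr : 0 ≤ r * (1-ρ)^2 * (1-r) :=
    mul_nonneg (mul_nonneg hr0 (sq_nonneg _)) (by linarith)
  nlinarith [mul_le_mul_of_nonneg_right stepA (by linarith : (0:ℝ) ≤ 1 + r), hfr, hρr]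

lemma key2 (v : ℂ → ℂ) (hd : DifferentiableOn ℂ v (ball 0 1))
    (hm : Set.MapsTo v (ball 0 1) (ball 0 1)) {w : ℂ} (hw : w ∈ ball (0:ℂ) 1) :
    ‖v w - v 0‖ * (1 - ‖v 0‖ * ‖w‖) ≤ (1 - ‖v 0‖) * (1 + ‖v 0‖) * ‖w‖ := by
  have hsp := sp_core v hd hm hw
  set a := v 0 with ha
  set ρ := ‖a‖ with hρ
  have hρ1 : ρ < 1 := by simpa [mem_ball_zero_iff] using hm (by simp : (0:ℂ) ∈ ball (0:ℂ) 1)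
  have hρ0 : 0 ≤ ρ := norm_nonneg _
  have hone : (1:ℂ) - (starRingEnd ℂ) a * v w
      = (1 - a * (starRingEnd ℂ) a) - (starRingEnd ℂ) a * (v w - a) := by ring
  have hnb : ‖(1:ℂ) - (starRingEnd ℂ) a * v w‖ ≤ (1 - ρ^2) + ρ * ‖v w - a‖ := by
    rw [hone]
    refine (norm_sub_le _ _).trans ?_
    have h1 : ‖(1:ℂ) - a * (starRingEnd ℂ) a‖ = 1 - ρ^2 := by
      rw [Complex.mul_conj']
      rw [show (1:ℂ) - (‖a‖:ℂ)^2 = ((1 - ρ^2 : ℝ) : ℂ) by push_cast; ring]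
      rw [Complex.norm_real, Real.norm_eq_abs]
      exact abs_of_nonneg (by nlinarith)
    rw [h1, norm_mul, RCLike.norm_conj]
  have hw1 : ‖w‖ < 1 := by simpa [mem_ball_zero_iff] using hw
  have hw0 : 0 ≤ ‖w‖ := norm_nonneg _
  have hd0 : 0 ≤ ‖v w - a‖ := norm_nonneg _
  nlinarith [hsp, hnb, mul_le_mul_of_nonneg_left hnb hw0]

lemma aux_main (u v : ℂ → ℂ) (hu : DifferentiableOn ℂ u (ball 0 1))
    (hv : DifferentiableOn ℂ v (ball 0 1))
    (hum : Set.MapsTo u (ball 0 1) (ball 0 1)) (hvm : Set.MapsTo v (ball 0 1) (ball 0 1))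
    (h00 : u 0 = v 0) {z w : ℂ} (hz : z ∈ ball (0:ℂ) 1) (hw : w ∈ ball (0:ℂ) 1)
    (hlt : ‖w‖ / (1 - ‖w‖) < (1 / 2) * ((1 - ‖z‖) / (1 + ‖z‖))) :
    ‖u z‖ + ‖v w - v 0‖ < 1 := by
  have hρv : ‖v 0‖ = ‖u 0‖ := by rw [h00]
  set ρ := ‖u 0‖ with hρ
  set s := ‖u z‖ with hs
  set d := ‖v w - v 0‖ with hd
  set r := ‖z‖ with hr
  set q := ‖w‖ with hq
  have k1 : (1 - ρ) * (1 - r) ≤ (1 - s) * (1 + r) := key1 u hu hum hz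
  have k2 : d * (1 - ρ * q) ≤ (1 - ρ) * (1 + ρ) * q := by
    have := key2 v hv hvm hw
    rwa [hρv] at this
  have hρ1 : ρ < 1 := by simpa [mem_ball_zero_iff] using hum (by simp : (0:ℂ) ∈ ball (0:ℂ) 1)
  have hr1 : r < 1 := by simpa [mem_ball_zero_iff] using hz
  have hq1 : q < 1 := by simpa [mem_ball_zero_iff] using hw
  have hρ0 : 0 ≤ ρ := norm_nonneg _
  have hr0 : 0 ≤ r := norm_nonneg _
  have hq0 : 0 ≤ q := norm_nonneg _
  have hd0 : 0 ≤ d := norm_nonneg _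
  have h3 : q * (2 * (1 + r)) < (1 - r) * (1 - q) := by
    have h1r : (1 + r) ≠ 0 := by positivity
    have e : (1/2 : ℝ) * ((1 - r) / (1 + r)) = (1 - r) / (2 * (1 + r)) := by
      field_simp
    rw [e] at hlt
    exact (div_lt_div_iff₀ (by linarith) (by linarith)).mp hlt
  have hd1 : d * (1 - q) ≤ 2 * (1 - ρ) * q := by
    nlinarith [mul_nonneg hd0 (mul_nonneg (by linarith : (0:ℝ) ≤ 1 - ρ) hq0),
      mul_nonneg (sq_nonneg (1 - ρ)) hq0]
  have h4 : d * (1 - q) * (1 + r) ≤ 2 * (1 - ρ) * q * (1 + r) :=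
    mul_le_mul_of_nonneg_right hd1 (by linarith)
  have h5 : 2 * (1 - ρ) * q * (1 + r) < (1 - ρ) * ((1 - r) * (1 - q)) := by
    nlinarith [mul_lt_mul_of_pos_left h3 (by linarith : (0:ℝ) < 1 - ρ)]
  have h6 : (1 - ρ) * ((1 - r) * (1 - q)) ≤ (1 - s) * (1 + r) * (1 - q) := by
    nlinarith [mul_le_mul_of_nonneg_right k1 (by linarith : (0:ℝ) ≤ 1 - q)]
  have h7 : d * (1 - q) * (1 + r) < (1 - s) * (1 + r) * (1 - q) := by linarith
  nlinarith [mul_pos (by linarith : (0:ℝ) < 1 - q) (by linarith : (0:ℝ) < 1 + r)]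

lemma max_attained (f g : ℂ → ℂ) (hfd : DifferentiableOn ℂ f uD)
    (hgd : DifferentiableOn ℂ g uD) (h00 : f 0 = g 0) {M : ℝ}
    (hf : ∀ z ∈ uD, ‖f z‖ ≤ M) (hg : ∀ z ∈ uD, ‖g z‖ ≤ M)
    {z₀ : ℂ} (hz₀ : z₀ ∈ uD) (hmax : M ≤ ‖f z₀‖) :
    ∃ c, (∀ z ∈ uD, f z = c) ∧ (∀ z ∈ uD, g z = c) := by
  have h0uD : (0:ℂ) ∈ uD := by simp [uD]
  have heq : ‖f z₀‖ = M := le_antisymm (hf _ hz₀) hmax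
  have hconn : IsPreconnected uD := (convex_ball (0:ℂ) 1).isPreconnected
  have hopen : IsOpen uD := isOpen_ball
  have hmax1 : IsMaxOn (norm ∘ f) uD z₀ := fun x hx => by
    simpa using (hf x hx).trans heq.ge
  have hfc := Complex.eqOn_of_isPreconnected_of_isMaxOn_norm hconn hopen hfd hz₀ hmax1
  have hg0 : ‖g 0‖ = M := by
    rw [← h00, show f 0 = f z₀ from hfc h0uD, heq]
  have hmax2 : IsMaxOn (norm ∘ g) uD 0 := fun x hx => by
    simpa using (hg x hx).trans hg0.ge
  have hgc := Complex.eqOn_of_isPreconnected_of_isMaxOn_norm hconn hopen hgd h0uD hmax2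
  refine ⟨f z₀, fun z hz => hfc hz, fun z hz => ?_⟩
  rw [show g z = g 0 from hgc hz, ← h00, show f 0 = f z₀ from hfc h0uD]

theorem stmt_7 (f₁ f₂ : ℂ → ℂ)
    (hf₁ : DifferentiableOn ℂ f₁ uD) (hf₂ : DifferentiableOn ℂ f₂ uD)
    (h0 : f₁ 0 = f₂ 0)
    (hbdd : ∃ C : ℝ, ∀ z ∈ uD, ‖f₁ z‖ ≤ C ∧ ‖f₂ z‖ ≤ C)
    (hnc : ¬ ∃ c : ℂ, (∀ z ∈ uD, f₁ z = c) ∧ (∀ z ∈ uD, f₂ z = c)) :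
    TT ⊆ Hset ∧
      ∀ p ∈ Hset, ‖f₁ p.1 + f₂ p.2 - f₁ 0‖ <
        supOn (fun q => f₁ q.1 + f₂ q.2 - f₁ 0) TT := by
  have huD : ∀ z : ℂ, z ∈ uD ↔ ‖z‖ < 1 := fun z => mem_ball_zero_iff
  have h0uD : (0:ℂ) ∈ uD := by simp [uD]
  constructor
  · -- TT ⊆ Hset
    intro p hp
    rcases hp with ⟨hp1, hp2⟩ | ⟨hp1, hp2⟩
    · have h1 : ‖p.1‖ < 1 := (huD _).mp hp1
      have h10 : 0 ≤ ‖p.1‖ := norm_nonneg _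
      refine ⟨⟨hp1, by rw [hp2]; exact h0uD⟩, Or.inl ?_⟩
      rw [hp2]
      simp only [norm_zero]
      rw [zero_div]
      have : (0:ℝ) < 1 - ‖p.1‖ := by linarith
      positivity
    · have h1 : ‖p.2‖ < 1 := (huD _).mp hp2
      have h10 : 0 ≤ ‖p.2‖ := norm_nonneg _
      refine ⟨⟨by rw [hp1]; exact h0uD, hp2⟩, Or.inr ?_⟩
      rw [hp1]
      simp only [norm_zero]
      rw [zero_div]
      have : (0:ℝ) < 1 - ‖p.2‖ := by linarith
      positivity
  · -- main estimate
    set g : ℂ × ℂ → ℂ := fun q => f₁ q.1 + f₂ q.2 - f₁ 0 with hgdef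
    set M : ℝ := supOn g TT with hMdef
    have h20 : f₂ 0 = f₁ 0 := h0.symm
    have hg1 : ∀ z : ℂ, g (z, 0) = f₁ z := by
      intro z; simp only [hgdef]; rw [h20]; ring
    have hg2 : ∀ z : ℂ, g (0, z) = f₂ z := by
      intro z; simp only [hgdef]; ring
    have hTT1 : ∀ z ∈ uD, ((z, 0) : ℂ × ℂ) ∈ TT := fun z hz => Or.inl ⟨hz, rfl⟩
    have hTT2 : ∀ z ∈ uD, ((0, z) : ℂ × ℂ) ∈ TT := fun z hz => Or.inr ⟨rfl, hz⟩
    obtain ⟨C, hC⟩ := hbdd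
    have hbddA : BddAbove ((fun p => ‖g p‖) '' TT) := by
      refine ⟨C, fun y hy => ?_⟩
      obtain ⟨p, hp, rfl⟩ := hy
      rcases hp with ⟨hp1, hp2⟩ | ⟨hp1, hp2⟩
      · have : g p = f₁ p.1 := by
          have := hg1 p.1
          rwa [show ((p.1, (0:ℂ)) : ℂ × ℂ) = p by rw [← hp2]] at this
        show ‖g p‖ ≤ C
        rw [this]; exact (hC _ hp1).1
      · have : g p = f₂ p.2 := by
          have := hg2 p.2
          rwa [show (((0:ℂ), p.2) : ℂ × ℂ) = p by rw [← hp1]] at this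
        show ‖g p‖ ≤ C
        rw [this]; exact (hC _ hp2).2
    have hle1 : ∀ z ∈ uD, ‖f₁ z‖ ≤ M := by
      intro z hz
      refine le_csSup hbddA ⟨(z, 0), hTT1 z hz, ?_⟩
      simp only [hg1 z]
    have hle2 : ∀ z ∈ uD, ‖f₂ z‖ ≤ M := by
      intro z hz
      refine le_csSup hbddA ⟨(0, z), hTT2 z hz, ?_⟩
      simp only [hg2 z]
    have hMpos : 0 < M := by
      by_contra h
      push_neg at h
      exact hnc ⟨0, fun z hz => norm_le_zero_iff.mp ((hle1 z hz).trans h),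
        fun z hz => norm_le_zero_iff.mp ((hle2 z hz).trans h)⟩
    have hs1 : ∀ z ∈ uD, ‖f₁ z‖ < M := by
      intro z hz
      rcases lt_or_eq_of_le (hle1 z hz) with h | h
      · exact h
      · exact absurd (max_attained f₁ f₂ hf₁ hf₂ h0 hle1 hle2 hz h.ge) hnc
    have hs2 : ∀ z ∈ uD, ‖f₂ z‖ < M := by
      intro z hz
      rcases lt_or_eq_of_le (hle2 z hz) with h | h
      · exact h
      · refine absurd ?_ hnc
        obtain ⟨c, hc1, hc2⟩ := max_attained f₂ f₁ hf₂ hf₁ h20 hle2 hle1 hz h.ge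
        exact ⟨c, hc2, hc1⟩
    have hMC : ‖(M : ℂ)‖ = M := by
      rw [Complex.norm_real, Real.norm_eq_abs]; exact abs_of_pos hMpos
    have hMne : (M : ℂ) ≠ 0 := by
      simpa using hMpos.ne'
    set u : ℂ → ℂ := fun z => f₁ z / (M : ℂ) with hu
    set v : ℂ → ℂ := fun z => f₂ z / (M : ℂ) with hv
    have hud : DifferentiableOn ℂ u (ball 0 1) := hf₁.div_const _
    have hvd : DifferentiableOn ℂ v (ball 0 1) := hf₂.div_const _
    have hum : Set.MapsTo u (ball 0 1) (ball 0 1) := by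
      intro z hz
      rw [mem_ball_zero_iff]
      show ‖f₁ z / (M:ℂ)‖ < 1
      rw [norm_div, hMC, div_lt_one hMpos]
      exact hs1 z hz
    have hvm : Set.MapsTo v (ball 0 1) (ball 0 1) := by
      intro z hz
      rw [mem_ball_zero_iff]
      show ‖f₂ z / (M:ℂ)‖ < 1
      rw [norm_div, hMC, div_lt_one hMpos]
      exact hs2 z hz
    have huv0 : u 0 = v 0 := by simp only [hu, hv]; rw [h0]
    have eu : ∀ z : ℂ, ‖f₁ z‖ = M * ‖u z‖ := by
      intro z
      show ‖f₁ z‖ = M * ‖f₁ z / (M:ℂ)‖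
      rw [norm_div, hMC, mul_div_cancel₀ _ hMpos.ne']
    have ev : ∀ z : ℂ, ‖f₂ z‖ = M * ‖v z‖ := by
      intro z
      show ‖f₂ z‖ = M * ‖f₂ z / (M:ℂ)‖
      rw [norm_div, hMC, mul_div_cancel₀ _ hMpos.ne']
    have eu' : ∀ z : ℂ, ‖f₁ z - f₁ 0‖ = M * ‖u z - u 0‖ := by
      intro z
      have : u z - u 0 = (f₁ z - f₁ 0) / (M:ℂ) := by
        simp only [hu]; ring
      rw [this, norm_div, hMC, mul_div_cancel₀ _ hMpos.ne']
    have ev' : ∀ z : ℂ, ‖f₂ z - f₂ 0‖ = M * ‖v z - v 0‖ := by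
      intro z
      have : v z - v 0 = (f₂ z - f₂ 0) / (M:ℂ) := by
        simp only [hv]; ring
      rw [this, norm_div, hMC, mul_div_cancel₀ _ hMpos.ne']
    intro p hp
    obtain ⟨⟨hp1, hp2⟩, hor⟩ := hp
    rcases hor with h | h
    · have hmain := aux_main u v hud hvd hum hvm huv0 hp1 hp2 h
      calc ‖f₁ p.1 + f₂ p.2 - f₁ 0‖ = ‖f₁ p.1 + (f₂ p.2 - f₂ 0)‖ := by
            rw [h0]; ring_nf
        _ ≤ ‖f₁ p.1‖ + ‖f₂ p.2 - f₂ 0‖ := norm_add_le _ _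
        _ = M * (‖u p.1‖ + ‖v p.2 - v 0‖) := by rw [eu, ev']; ring
        _ < M * 1 := by exact mul_lt_mul_of_pos_left hmain hMpos
        _ = M := mul_one M
    · have hmain := aux_main v u hvd hud hvm hum huv0.symm hp2 hp1 h
      calc ‖f₁ p.1 + f₂ p.2 - f₁ 0‖ = ‖f₂ p.2 + (f₁ p.1 - f₁ 0)‖ := by
            ring_nf
        _ ≤ ‖f₂ p.2‖ + ‖f₁ p.1 - f₁ 0‖ := norm_add_le _ _
        _ = M * (‖v p.2‖ + ‖u p.1 - u 0‖) := by rw [ev, eu']; ring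
        _ < M * 1 := by exact mul_lt_mul_of_pos_left hmain hMpos
        _ = M := mul_one M
end
end
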